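/- arXiv:1401.1443 — 6 statements merged into one kernel-verified Lean document; each statement's English description precedes it below -/
import Mathlib

section
/- For all p, q ∈ (0,1) with p ≠ q, all r in the open interval Λ_{p,q} = (max{0, p+q−1}, min{p,q}), and any self-similar coupling γ_r, the first moment integral satisfies ∫_{ℝ×ℝ} |x − y| dγ_r(x,y) = ((t₂−t₁)/(1−c)) · (c(p−q)² + (1−c)(p+q−2r)) / ((1−c) + c(p+q−2r)). -/
open MeasureTheory

/-- Theorem 2.1: first moment of a self-similar coupling. -/
theorem first_moment_self_similar_coupling
    (c t₁ t₂ : ℝ) (hc : c ∈ Set.Ioc (0:ℝ) (1/2))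
    (ht₁ : t₁ ∈ Set.Icc (0:ℝ) (1 - 2*c)) (ht₂ : t₂ ∈ Set.Icc (t₁ + c) (1 - c))
    (p q : ℝ) (hp : p ∈ Set.Ioo (0:ℝ) 1) (hq : q ∈ Set.Ioo (0:ℝ) 1) (hpq : p ≠ q)
    (r : ℝ) (hr : r ∈ Set.Ioo (max 0 (p + q - 1)) (min p q))
    (γ : Measure (ℝ × ℝ)) (hγ : IsProbabilityMeasure γ)
    (hsupp : γ ((Set.Icc (0:ℝ) 1 ×ˢ Set.Icc (0:ℝ) 1)ᶜ) = 0)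
    (hss : γ =
        ENNReal.ofReal r • γ.map (fun z : ℝ × ℝ => (c * z.1 + t₁, c * z.2 + t₁))
      + ENNReal.ofReal (p - r) • γ.map (fun z : ℝ × ℝ => (c * z.1 + t₁, c * z.2 + t₂))
      + ENNReal.ofReal (q - r) • γ.map (fun z : ℝ × ℝ => (c * z.1 + t₂, c * z.2 + t₁))
      + ENNReal.ofReal (1 - p - q + r) • γ.map (fun z : ℝ × ℝ => (c * z.1 + t₂, c * z.2 + t₂))) :
    ∫ z : ℝ × ℝ, |z.1 - z.2| ∂γ
      = (t₂ - t₁) / (1 - c) *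
          ((c * (p - q)^2 + (1 - c) * (p + q - 2*r)) / ((1 - c) + c * (p + q - 2*r))) := by
  obtain ⟨hc0, hc1⟩ := hc
  have hc1' : c < 1 := lt_of_le_of_lt hc1 (by norm_num)
  have hΔ : c ≤ t₂ - t₁ := by have := ht₂.1; linarith
  have hr1 : (0:ℝ) < r := lt_of_le_of_lt (le_max_left _ _) hr.1
  have hr2 : p + q - 1 < r := lt_of_le_of_lt (le_max_right _ _) hr.1
  have hrp : r < p := lt_of_lt_of_le hr.2 (min_le_left _ _)
  have hrq : r < q := lt_of_lt_of_le hr.2 (min_le_right _ _)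
  have hmem : ∀ᵐ z ∂γ, z ∈ Set.Icc (0:ℝ) 1 ×ˢ Set.Icc (0:ℝ) 1 := by
    exact mem_ae_iff.mpr hsupp
  -- integrability of continuous functions
  have hint : ∀ f : ℝ × ℝ → ℝ, Continuous f → Integrable f γ := by
    intro f hf
    obtain ⟨C, hC⟩ := (isCompact_Icc.prod isCompact_Icc).exists_bound_of_continuousOn
      hf.continuousOn
    exact (integrable_const C).mono' hf.aestronglyMeasurable
      (hmem.mono fun z hz => hC z hz)
  -- key decomposition
  have key : ∀ f : ℝ × ℝ → ℝ, Continuous f →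
      ∫ z, f z ∂γ =
        r * ∫ z : ℝ × ℝ, f (c * z.1 + t₁, c * z.2 + t₁) ∂γ
        + (p - r) * ∫ z : ℝ × ℝ, f (c * z.1 + t₁, c * z.2 + t₂) ∂γ
        + (q - r) * ∫ z : ℝ × ℝ, f (c * z.1 + t₂, c * z.2 + t₁) ∂γ
        + (1 - p - q + r) * ∫ z : ℝ × ℝ, f (c * z.1 + t₂, c * z.2 + t₂) ∂γ := by
    intro f hf
    have hT : ∀ a b : ℝ, Continuous (fun z : ℝ × ℝ => (c * z.1 + a, c * z.2 + b)) := by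
      intro a b; fun_prop
    have hmap : ∀ a b : ℝ,
        ∫ z, f z ∂(γ.map (fun z : ℝ × ℝ => (c * z.1 + a, c * z.2 + b))) =
        ∫ z : ℝ × ℝ, f (c * z.1 + a, c * z.2 + b) ∂γ := by
      intro a b
      rw [integral_map (hT a b).aemeasurable hf.aestronglyMeasurable]
    have hI : ∀ a b : ℝ,
        Integrable f (γ.map (fun z : ℝ × ℝ => (c * z.1 + a, c * z.2 + b))) := by
      intro a b
      rw [integrable_map_measure hf.aestronglyMeasurable (hT a b).aemeasurable]
      exact hint _ (hf.comp (hT a b))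
    have h11 := (hI t₁ t₁).smul_measure (c := ENNReal.ofReal r) ENNReal.ofReal_ne_top
    have h12 := (hI t₁ t₂).smul_measure (c := ENNReal.ofReal (p - r)) ENNReal.ofReal_ne_top
    have h21 := (hI t₂ t₁).smul_measure (c := ENNReal.ofReal (q - r)) ENNReal.ofReal_ne_top
    have h22 := (hI t₂ t₂).smul_measure (c := ENNReal.ofReal (1 - p - q + r))
      ENNReal.ofReal_ne_top
    conv_lhs => rw [hss]
    rw [integral_add_measure ((h11.add_measure h12).add_measure h21) h22,
        integral_add_measure (h11.add_measure h12) h21,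
        integral_add_measure h11 h12,
        integral_smul_measure, integral_smul_measure, integral_smul_measure,
        integral_smul_measure,
        ENNReal.toReal_ofReal hr1.le, ENNReal.toReal_ofReal (by linarith),
        ENNReal.toReal_ofReal (by linarith), ENNReal.toReal_ofReal (by linarith),
        hmap t₁ t₁, hmap t₁ t₂, hmap t₂ t₁, hmap t₂ t₂]
    simp [smul_eq_mul]
  -- the signed first moment D
  set D := ∫ z : ℝ × ℝ, (z.1 - z.2) ∂γ with hDdef
  have hg : Continuous (fun z : ℝ × ℝ => z.1 - z.2) := by fun_prop
  have hintD : Integrable (fun z : ℝ × ℝ => z.1 - z.2) γ := hint _ hg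
  have hm1 : ∀ a b : ℝ, ∫ z : ℝ × ℝ, (c * z.1 + a - (c * z.2 + b)) ∂γ = c * D + (a - b) := by
    intro a b
    have he : (fun z : ℝ × ℝ => c * z.1 + a - (c * z.2 + b))
        = fun z : ℝ × ℝ => c * (z.1 - z.2) + (a - b) := by
      funext z; ring
    rw [he, integral_add (hintD.const_mul c) (integrable_const _), integral_const_mul,
      integral_const]
    simp [hDdef]
  have hDeq : D = r * (c * D + (t₁ - t₁)) + (p - r) * (c * D + (t₁ - t₂))
      + (q - r) * (c * D + (t₂ - t₁)) + (1 - p - q + r) * (c * D + (t₂ - t₂)) := by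
    have h := key (fun z => z.1 - z.2) hg
    simp only at h
    rw [hm1 t₁ t₁, hm1 t₁ t₂, hm1 t₂ t₁, hm1 t₂ t₂] at h
    exact h
  have hDval : D * (1 - c) = (q - p) * (t₂ - t₁) := by linear_combination hDeq
  -- the absolute first moment I
  set I := ∫ z : ℝ × ℝ, |z.1 - z.2| ∂γ with hIdef
  have hga : Continuous (fun z : ℝ × ℝ => |z.1 - z.2|) := by fun_prop
  have hm2 : ∀ a : ℝ, ∫ z : ℝ × ℝ, |c * z.1 + a - (c * z.2 + a)| ∂γ = c * I := by
    intro a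
    have he : (fun z : ℝ × ℝ => |c * z.1 + a - (c * z.2 + a)|)
        = fun z : ℝ × ℝ => c * |z.1 - z.2| := by
      funext z
      rw [show c * z.1 + a - (c * z.2 + a) = c * (z.1 - z.2) by ring, abs_mul,
        abs_of_nonneg hc0.le]
    rw [he, integral_const_mul]
  have hbound : ∀ z : ℝ × ℝ, z ∈ Set.Icc (0:ℝ) 1 ×ˢ Set.Icc (0:ℝ) 1 →
      -c ≤ c * (z.1 - z.2) ∧ c * (z.1 - z.2) ≤ c := by
    intro z hz
    obtain ⟨⟨h1, h2⟩, h3, h4⟩ := hz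
    constructor <;> nlinarith
  have hm3 : ∫ z : ℝ × ℝ, |c * z.1 + t₁ - (c * z.2 + t₂)| ∂γ = (t₂ - t₁) - c * D := by
    have hcong : ∀ᵐ z ∂γ, |c * z.1 + t₁ - (c * z.2 + t₂)|
        = (t₂ - t₁) - c * (z.1 - z.2) := by
      filter_upwards [hmem] with z hz
      obtain ⟨_, hb⟩ := hbound z hz
      rw [show c * z.1 + t₁ - (c * z.2 + t₂) = c * (z.1 - z.2) - (t₂ - t₁) by ring,
        abs_of_nonpos (by linarith)]
      ring
    rw [integral_congr_ae hcong, integral_sub (integrable_const _) (hintD.const_mul c),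
      integral_const_mul, integral_const]
    simp [hDdef]
  have hm4 : ∫ z : ℝ × ℝ, |c * z.1 + t₂ - (c * z.2 + t₁)| ∂γ = (t₂ - t₁) + c * D := by
    have hcong : ∀ᵐ z ∂γ, |c * z.1 + t₂ - (c * z.2 + t₁)|
        = (t₂ - t₁) + c * (z.1 - z.2) := by
      filter_upwards [hmem] with z hz
      obtain ⟨hb, _⟩ := hbound z hz
      rw [show c * z.1 + t₂ - (c * z.2 + t₁) = (t₂ - t₁) + c * (z.1 - z.2) by ring,
        abs_of_nonneg (by linarith)]
    rw [integral_congr_ae hcong, integral_add (integrable_const _) (hintD.const_mul c),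
      integral_const_mul, integral_const]
    simp [hDdef]
  have hIeq : I = r * (c * I) + (p - r) * ((t₂ - t₁) - c * D)
      + (q - r) * ((t₂ - t₁) + c * D) + (1 - p - q + r) * (c * I) := by
    have h := key (fun z => |z.1 - z.2|) hga
    simp only at h
    rw [hm2 t₁, hm2 t₂, hm3, hm4] at h
    exact h
  have hIval : I * ((1 - c) + c * (p + q - 2*r))
      = (p + q - 2*r) * (t₂ - t₁) + c * (q - p) * D := by linear_combination hIeq
  have hK : (0:ℝ) < (1 - c) + c * (p + q - 2*r) := by nlinarith
  rw [hIdef, div_mul_div_comm, eq_div_iff (mul_pos (by linarith : (0:ℝ) < 1 - c) hK).ne']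
  linear_combination (1 - c) * hIval + c * (q - p) * hDval
end

section
/- For all p, q ∈ (0,1) with p ≠ q, all r in the open interval Λ_{p,q} = (max{0, p+q−1}, min{p,q}), and any self-similar coupling γ_r, the second moment integral satisfies ∫_{ℝ×ℝ} |x − y|² dγ_r(x,y) = ((t₂−t₁)/(1−c))² · (2c(p−q)² + (1−c)(p+q−2r)) / (1+c). -/
open MeasureTheory

lemma my_integrable_aux {γ : Measure (ℝ×ℝ)} [IsFiniteMeasure γ]
    (hsupp : γ ((Set.Icc (0:ℝ) 1 ×ˢ Set.Icc (0:ℝ) 1)ᶜ) = 0)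
    (f : ℝ×ℝ → ℝ) (hf : Continuous f) : Integrable f γ := by
  obtain ⟨C, hC⟩ := (isCompact_Icc.prod isCompact_Icc).exists_bound_of_continuousOn
    hf.continuousOn
  refine (integrable_const C).mono' hf.aestronglyMeasurable ?_
  have hae : ∀ᵐ z ∂γ, z ∈ Set.Icc (0:ℝ) 1 ×ˢ Set.Icc (0:ℝ) 1 := by
    rw [ae_iff]
    exact hsupp
  filter_upwards [hae] with z hz using hC z hz

/-- Theorem 2.3: second moment of a self-similar coupling. -/
theorem second_moment_self_similar_coupling
    (c t₁ t₂ : ℝ) (hc : c ∈ Set.Ioc (0:ℝ) (1/2))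
    (ht₁ : t₁ ∈ Set.Icc (0:ℝ) (1 - 2*c)) (ht₂ : t₂ ∈ Set.Icc (t₁ + c) (1 - c))
    (p q : ℝ) (hp : p ∈ Set.Ioo (0:ℝ) 1) (hq : q ∈ Set.Ioo (0:ℝ) 1) (hpq : p ≠ q)
    (r : ℝ) (hr : r ∈ Set.Ioo (max 0 (p + q - 1)) (min p q))
    (γ : Measure (ℝ × ℝ)) (hγ : IsProbabilityMeasure γ)
    (hsupp : γ ((Set.Icc (0:ℝ) 1 ×ˢ Set.Icc (0:ℝ) 1)ᶜ) = 0)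
    (hss : γ =
        ENNReal.ofReal r • γ.map (fun z : ℝ × ℝ => (c * z.1 + t₁, c * z.2 + t₁))
      + ENNReal.ofReal (p - r) • γ.map (fun z : ℝ × ℝ => (c * z.1 + t₁, c * z.2 + t₂))
      + ENNReal.ofReal (q - r) • γ.map (fun z : ℝ × ℝ => (c * z.1 + t₂, c * z.2 + t₁))
      + ENNReal.ofReal (1 - p - q + r) • γ.map (fun z : ℝ × ℝ => (c * z.1 + t₂, c * z.2 + t₂))) :
    ∫ z : ℝ × ℝ, |z.1 - z.2|^2 ∂γ
      = ((t₂ - t₁) / (1 - c))^2 *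
          ((2 * c * (p - q)^2 + (1 - c) * (p + q - 2*r)) / (1 + c)) := by
  haveI := hγ
  obtain ⟨hc0, hc2⟩ := hc
  have h1c : (0:ℝ) < 1 - c := by linarith
  have h1c' : (0:ℝ) < 1 + c := by linarith
  have hr0 : 0 < r := lt_of_le_of_lt (le_max_left _ _) hr.1
  have hrpq : p + q - 1 < r := lt_of_le_of_lt (le_max_right _ _) hr.1
  have hrp : r < p := lt_of_lt_of_le hr.2 (min_le_left _ _)
  have hrq : r < q := lt_of_lt_of_le hr.2 (min_le_right _ _)
  have hint : ∀ f : ℝ×ℝ → ℝ, Continuous f → Integrable f γ :=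
    fun f hf => my_integrable_aux hsupp f hf
  have key : ∀ f : ℝ×ℝ → ℝ, Continuous f →
      ∫ z, f z ∂γ = r * ∫ z, f (c*z.1+t₁, c*z.2+t₁) ∂γ
        + (p-r) * ∫ z, f (c*z.1+t₁, c*z.2+t₂) ∂γ
        + (q-r) * ∫ z, f (c*z.1+t₂, c*z.2+t₁) ∂γ
        + (1-p-q+r) * ∫ z, f (c*z.1+t₂, c*z.2+t₂) ∂γ := by
    intro f hf
    have hT : ∀ a b : ℝ, Continuous (fun z : ℝ×ℝ => (c*z.1+a, c*z.2+b)) := by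
      intro a b; fun_prop
    have hmapint : ∀ a b : ℝ, Integrable f (γ.map (fun z : ℝ×ℝ => (c*z.1+a, c*z.2+b))) := by
      intro a b
      rw [integrable_map_measure hf.aestronglyMeasurable (hT a b).aemeasurable]
      exact hint _ (hf.comp (hT a b))
    have hsm : ∀ (s a b : ℝ),
        Integrable f (ENNReal.ofReal s • γ.map (fun z : ℝ×ℝ => (c*z.1+a, c*z.2+b))) :=
      fun s a b => (hmapint a b).smul_measure ENNReal.ofReal_ne_top
    conv_lhs => rw [hss]
    rw [integral_add_measure (((hsm r t₁ t₁).add_measure (hsm (p-r) t₁ t₂)).add_measure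
        (hsm (q-r) t₂ t₁)) (hsm (1-p-q+r) t₂ t₂),
      integral_add_measure ((hsm r t₁ t₁).add_measure (hsm (p-r) t₁ t₂)) (hsm (q-r) t₂ t₁),
      integral_add_measure (hsm r t₁ t₁) (hsm (p-r) t₁ t₂),
      integral_smul_measure, integral_smul_measure, integral_smul_measure, integral_smul_measure,
      integral_map (hT t₁ t₁).aemeasurable hf.aestronglyMeasurable,
      integral_map (hT t₁ t₂).aemeasurable hf.aestronglyMeasurable,
      integral_map (hT t₂ t₁).aemeasurable hf.aestronglyMeasurable,
      integral_map (hT t₂ t₂).aemeasurable hf.aestronglyMeasurable,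
      ENNReal.toReal_ofReal hr0.le, ENNReal.toReal_ofReal (by linarith : (0:ℝ) ≤ p - r),
      ENNReal.toReal_ofReal (by linarith : (0:ℝ) ≤ q - r),
      ENNReal.toReal_ofReal (by linarith : (0:ℝ) ≤ 1 - p - q + r)]
    simp only [smul_eq_mul]
  have hlin : ∀ a b k : ℝ,
      ∫ z : ℝ×ℝ, (a*(z.1-z.2)^2 + (b*(z.1-z.2) + k)) ∂γ
        = a * (∫ z : ℝ×ℝ, (z.1-z.2)^2 ∂γ) + (b * (∫ z : ℝ×ℝ, (z.1-z.2) ∂γ) + k) := by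
    intro a b k
    have ia : Integrable (fun z : ℝ×ℝ => a*(z.1-z.2)^2) γ := hint _ (by fun_prop)
    have ib : Integrable (fun z : ℝ×ℝ => b*(z.1-z.2) + k) γ := hint _ (by fun_prop)
    have ib' : Integrable (fun z : ℝ×ℝ => b*(z.1-z.2)) γ := hint _ (by fun_prop)
    rw [integral_add ia ib, integral_add ib' (integrable_const k),
      integral_const_mul, integral_const_mul, integral_const]
    simp
  have e1 : (∫ z : ℝ×ℝ, (z.1-z.2) ∂γ)
      = c * (∫ z : ℝ×ℝ, (z.1-z.2) ∂γ) + (t₂-t₁) * (q-p) := by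
    have h := key (fun z => z.1 - z.2) (by fun_prop)
    have g : ∀ a b : ℝ,
        ∫ z : ℝ×ℝ, ((fun z : ℝ×ℝ => z.1 - z.2) (c*z.1+a, c*z.2+b)) ∂γ
          = 0 * (∫ z : ℝ×ℝ, (z.1-z.2)^2 ∂γ) + (c * (∫ z : ℝ×ℝ, (z.1-z.2) ∂γ) + (a-b)) := by
      intro a b
      rw [← hlin 0 c (a-b)]
      congr 1
      funext z
      show (c*z.1+a) - (c*z.2+b) = _
      ring
    rw [g, g, g, g] at h
    linear_combination h
  have e2 : (∫ z : ℝ×ℝ, (z.1-z.2)^2 ∂γ)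
      = c^2 * (∫ z : ℝ×ℝ, (z.1-z.2)^2 ∂γ)
        + 2*c*(t₂-t₁)*(q-p) * (∫ z : ℝ×ℝ, (z.1-z.2) ∂γ) + (t₂-t₁)^2*(p+q-2*r) := by
    have h := key (fun z => (z.1 - z.2)^2) (by fun_prop)
    have g : ∀ a b : ℝ,
        ∫ z : ℝ×ℝ, ((fun z : ℝ×ℝ => (z.1 - z.2)^2) (c*z.1+a, c*z.2+b)) ∂γ
          = c^2 * (∫ z : ℝ×ℝ, (z.1-z.2)^2 ∂γ)
            + (2*c*(a-b) * (∫ z : ℝ×ℝ, (z.1-z.2) ∂γ) + (a-b)^2) := by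
      intro a b
      rw [← hlin (c^2) (2*c*(a-b)) ((a-b)^2)]
      congr 1
      funext z
      show ((c*z.1+a) - (c*z.2+b))^2 = _
      ring
    rw [g, g, g, g] at h
    linear_combination h
  simp only [sq_abs]
  have h1c0 : (1:ℝ) - c ≠ 0 := ne_of_gt h1c
  have h1c1 : (1:ℝ) + c ≠ 0 := ne_of_gt h1c'
  field_simp
  linear_combination (1-c)*e2 + 2*c*(t₂-t₁)*(q-p)*e1
end

section
/- For all p, q ∈ (0,1) with p ≠ q, all r in the open interval Λ_{p,q} = (max{0, p+q−1}, min{p,q}), and any self-similar coupling γ_r, the signed first moment satisfies ∫_{ℝ×ℝ} (x − y) dγ_r(x,y) = 4(t₂−t₁)(q−r)(p−r) / ((p−q)(1−c+c(p+q−2r))) − ((p+q−2r)/(p−q)) · ∫_{ℝ×ℝ} |x − y| dγ_r(x,y). -/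
open MeasureTheory

/-- Lemma 3.1: the signed first moment of a self-similar coupling. -/
theorem signed_first_moment_self_similar_coupling
    (c t₁ t₂ : ℝ) (hc : c ∈ Set.Ioc (0:ℝ) (1/2))
    (ht₁ : t₁ ∈ Set.Icc (0:ℝ) (1 - 2*c)) (ht₂ : t₂ ∈ Set.Icc (t₁ + c) (1 - c))
    (p q : ℝ) (hp : p ∈ Set.Ioo (0:ℝ) 1) (hq : q ∈ Set.Ioo (0:ℝ) 1) (hpq : p ≠ q)
    (r : ℝ) (hr : r ∈ Set.Ioo (max 0 (p + q - 1)) (min p q))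
    (γ : Measure (ℝ × ℝ)) (hγ : IsProbabilityMeasure γ)
    (hsupp : γ ((Set.Icc (0:ℝ) 1 ×ˢ Set.Icc (0:ℝ) 1)ᶜ) = 0)
    (hss : γ =
        ENNReal.ofReal r • γ.map (fun z : ℝ × ℝ => (c * z.1 + t₁, c * z.2 + t₁))
      + ENNReal.ofReal (p - r) • γ.map (fun z : ℝ × ℝ => (c * z.1 + t₁, c * z.2 + t₂))
      + ENNReal.ofReal (q - r) • γ.map (fun z : ℝ × ℝ => (c * z.1 + t₂, c * z.2 + t₁))
      + ENNReal.ofReal (1 - p - q + r) • γ.map (fun z : ℝ × ℝ => (c * z.1 + t₂, c * z.2 + t₂))) :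
    ∫ z : ℝ × ℝ, (z.1 - z.2) ∂γ
      = 4 * (t₂ - t₁) * (q - r) * (p - r) / ((p - q) * (1 - c + c * (p + q - 2*r)))
        - ((p + q - 2*r) / (p - q)) * ∫ z : ℝ × ℝ, |z.1 - z.2| ∂γ := by
  obtain ⟨hc0, hc2⟩ := hc
  have hr0 : 0 < r := lt_of_le_of_lt (le_max_left _ _) hr.1
  have hrpq : p + q - 1 < r := lt_of_le_of_lt (le_max_right _ _) hr.1
  have hrp : r < p := lt_of_lt_of_le hr.2 (min_le_left _ _)
  have hrq : r < q := lt_of_lt_of_le hr.2 (min_le_right _ _)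
  have hpq' : p - q ≠ 0 := sub_ne_zero.mpr hpq
  have hc1 : (0:ℝ) < 1 - c := by linarith
  have hD : (0:ℝ) < 1 - c + c * (p + q - 2*r) := by nlinarith
  have hd : c ≤ t₂ - t₁ := by have := ht₂.1; linarith
  -- a.e. membership in the unit square
  have haes : ∀ᵐ z ∂γ, z ∈ (Set.Icc (0:ℝ) 1 ×ˢ Set.Icc (0:ℝ) 1) := by
    rw [ae_iff]; exact hsupp
  -- integrability
  have hcont : AEStronglyMeasurable (fun z : ℝ × ℝ => z.1 - z.2) γ :=
    (continuous_fst.sub continuous_snd).aestronglyMeasurable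
  have hint : Integrable (fun z : ℝ × ℝ => z.1 - z.2) γ := by
    refine (integrable_const (1:ℝ)).mono' hcont ?_
    filter_upwards [haes] with z hz
    obtain ⟨⟨h1, h2⟩, ⟨h3, h4⟩⟩ := hz
    rw [Real.norm_eq_abs, abs_le]; constructor <;> linarith
  have habs : Integrable (fun z : ℝ × ℝ => |z.1 - z.2|) γ := hint.abs
  have hTm : ∀ a b : ℝ, Measurable (fun z : ℝ × ℝ => (c * z.1 + a, c * z.2 + b)) := by
    intro a b; fun_prop
  -- integrability wrt mapped measures
  have hcomp : ∀ a b : ℝ, ((fun z : ℝ × ℝ => z.1 - z.2) ∘ fun z : ℝ × ℝ => (c * z.1 + a, c * z.2 + b))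
      = fun z : ℝ × ℝ => c * (z.1 - z.2) + (a - b) := by
    intro a b; funext z; simp [Function.comp]; ring
  have hintmap : ∀ a b : ℝ, Integrable (fun z : ℝ × ℝ => z.1 - z.2)
      (γ.map (fun z : ℝ × ℝ => (c * z.1 + a, c * z.2 + b))) := by
    intro a b
    rw [integrable_map_measure (g := fun z : ℝ × ℝ => z.1 - z.2) (continuous_fst.sub continuous_snd).aestronglyMeasurable
      (hTm a b).aemeasurable, hcomp]
    exact (hint.const_mul c).add (integrable_const _)
  have habsmap : ∀ a b : ℝ, Integrable (fun z : ℝ × ℝ => |z.1 - z.2|)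
      (γ.map (fun z : ℝ × ℝ => (c * z.1 + a, c * z.2 + b))) := fun a b => (hintmap a b).abs
  -- first moments of mapped measures
  have hmapI : ∀ a b : ℝ, ∫ z : ℝ × ℝ, (z.1 - z.2) ∂(γ.map (fun z : ℝ × ℝ => (c * z.1 + a, c * z.2 + b)))
      = c * (∫ z : ℝ × ℝ, (z.1 - z.2) ∂γ) + (a - b) := by
    intro a b
    rw [integral_map (hTm a b).aemeasurable (f := fun z : ℝ × ℝ => z.1 - z.2) (continuous_fst.sub continuous_snd).aestronglyMeasurable]
    have : (fun z : ℝ × ℝ => ((c * z.1 + a, c * z.2 + b) : ℝ × ℝ).1 - ((c * z.1 + a, c * z.2 + b) : ℝ × ℝ).2)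
        = fun z : ℝ × ℝ => c * (z.1 - z.2) + (a - b) := funext fun z => by simp; ring
    rw [this, integral_add (hint.const_mul c) (integrable_const _), MeasureTheory.integral_const_mul,
      integral_const, measureReal_def, measure_univ, ENNReal.toReal_one, one_smul]
  -- absolute moments of mapped measures
  have habsC : Continuous (fun z : ℝ × ℝ => |z.1 - z.2|) := (continuous_fst.sub continuous_snd).abs
  have hmapA0 : ∀ a : ℝ, ∫ z : ℝ × ℝ, |z.1 - z.2| ∂(γ.map (fun z : ℝ × ℝ => (c * z.1 + a, c * z.2 + a)))
      = c * (∫ z : ℝ × ℝ, |z.1 - z.2| ∂γ) := by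
    intro a
    rw [integral_map (hTm a a).aemeasurable habsC.aestronglyMeasurable]
    have : (fun z : ℝ × ℝ => |((c * z.1 + a, c * z.2 + a) : ℝ × ℝ).1 - ((c * z.1 + a, c * z.2 + a) : ℝ × ℝ).2|)
        = fun z : ℝ × ℝ => c * |z.1 - z.2| := by
      funext z; simp only
      rw [show c * z.1 + a - (c * z.2 + a) = c * (z.1 - z.2) by ring, abs_mul, abs_of_pos hc0]
    rw [this, MeasureTheory.integral_const_mul]
  have hmapA12 : ∫ z : ℝ × ℝ, |z.1 - z.2| ∂(γ.map (fun z : ℝ × ℝ => (c * z.1 + t₁, c * z.2 + t₂)))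
      = (t₂ - t₁) - c * (∫ z : ℝ × ℝ, (z.1 - z.2) ∂γ) := by
    rw [integral_map (hTm t₁ t₂).aemeasurable habsC.aestronglyMeasurable]
    have : ∫ z : ℝ × ℝ, |((c * z.1 + t₁, c * z.2 + t₂) : ℝ × ℝ).1 - ((c * z.1 + t₁, c * z.2 + t₂) : ℝ × ℝ).2| ∂γ
        = ∫ z : ℝ × ℝ, ((t₂ - t₁) + (-c) * (z.1 - z.2)) ∂γ := by
      refine integral_congr_ae ?_
      filter_upwards [haes] with z hz
      obtain ⟨⟨h1, h2⟩, ⟨h3, h4⟩⟩ := hz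
      rw [abs_of_nonpos (by nlinarith)]; ring
    rw [this, integral_add (integrable_const _) (hint.const_mul _), MeasureTheory.integral_const_mul,
      integral_const, measureReal_def, measure_univ, ENNReal.toReal_one, one_smul]
    ring
  have hmapA21 : ∫ z : ℝ × ℝ, |z.1 - z.2| ∂(γ.map (fun z : ℝ × ℝ => (c * z.1 + t₂, c * z.2 + t₁)))
      = (t₂ - t₁) + c * (∫ z : ℝ × ℝ, (z.1 - z.2) ∂γ) := by
    rw [integral_map (hTm t₂ t₁).aemeasurable habsC.aestronglyMeasurable]
    have : ∫ z : ℝ × ℝ, |((c * z.1 + t₂, c * z.2 + t₁) : ℝ × ℝ).1 - ((c * z.1 + t₂, c * z.2 + t₁) : ℝ × ℝ).2| ∂γ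
        = ∫ z : ℝ × ℝ, ((t₂ - t₁) + c * (z.1 - z.2)) ∂γ := by
      refine integral_congr_ae ?_
      filter_upwards [haes] with z hz
      obtain ⟨⟨h1, h2⟩, ⟨h3, h4⟩⟩ := hz
      rw [abs_of_nonneg (by nlinarith)]; ring
    rw [this, integral_add (integrable_const _) (hint.const_mul _), MeasureTheory.integral_const_mul,
      integral_const, measureReal_def, measure_univ, ENNReal.toReal_one, one_smul]
  -- splitting an integral along hss
  have split : ∀ g : ℝ × ℝ → ℝ,
      (∀ a b : ℝ, Integrable g (γ.map (fun z : ℝ × ℝ => (c * z.1 + a, c * z.2 + b)))) →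
      ∫ z : ℝ × ℝ, g z ∂γ
        = r * ∫ z : ℝ × ℝ, g z ∂(γ.map (fun z : ℝ × ℝ => (c * z.1 + t₁, c * z.2 + t₁)))
        + (p - r) * ∫ z : ℝ × ℝ, g z ∂(γ.map (fun z : ℝ × ℝ => (c * z.1 + t₁, c * z.2 + t₂)))
        + (q - r) * ∫ z : ℝ × ℝ, g z ∂(γ.map (fun z : ℝ × ℝ => (c * z.1 + t₂, c * z.2 + t₁)))
        + (1 - p - q + r) * ∫ z : ℝ × ℝ, g z ∂(γ.map (fun z : ℝ × ℝ => (c * z.1 + t₂, c * z.2 + t₂))) := by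
    intro g hg
    conv_lhs => rw [hss]
    rw [integral_add_measure ((((hg t₁ t₁).smul_measure ENNReal.ofReal_ne_top).add_measure
          ((hg t₁ t₂).smul_measure ENNReal.ofReal_ne_top)).add_measure
          ((hg t₂ t₁).smul_measure ENNReal.ofReal_ne_top))
        ((hg t₂ t₂).smul_measure ENNReal.ofReal_ne_top),
      integral_add_measure (((hg t₁ t₁).smul_measure ENNReal.ofReal_ne_top).add_measure
          ((hg t₁ t₂).smul_measure ENNReal.ofReal_ne_top))
        ((hg t₂ t₁).smul_measure ENNReal.ofReal_ne_top),
      integral_add_measure ((hg t₁ t₁).smul_measure ENNReal.ofReal_ne_top)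
        ((hg t₁ t₂).smul_measure ENNReal.ofReal_ne_top),
      integral_smul_measure, integral_smul_measure, integral_smul_measure, integral_smul_measure,
      ENNReal.toReal_ofReal hr0.le, ENNReal.toReal_ofReal (by linarith : (0:ℝ) ≤ p - r),
      ENNReal.toReal_ofReal (by linarith : (0:ℝ) ≤ q - r),
      ENNReal.toReal_ofReal (by linarith : (0:ℝ) ≤ 1 - p - q + r)]
    simp only [smul_eq_mul]
  set I := ∫ z : ℝ × ℝ, (z.1 - z.2) ∂γ with hIdef
  set J := ∫ z : ℝ × ℝ, |z.1 - z.2| ∂γ with hJdef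
  have e1 : (1 - c) * I = (t₂ - t₁) * (q - p) := by
    have := split (fun z => z.1 - z.2) hintmap
    simp only [hmapI] at this
    nlinarith [this]
  have e2 : (1 - c + c * (p + q - 2*r)) * J = (t₂ - t₁) * (p + q - 2*r) + c * (q - p) * I := by
    have := split (fun z => |z.1 - z.2|) habsmap
    simp only [hmapA0, hmapA12, hmapA21] at this
    nlinarith [this]
  have hI : I = (t₂ - t₁) * (q - p) / (1 - c) := by
    field_simp at e1 ⊢; linarith
  have hJ : J = ((t₂ - t₁) * (p + q - 2*r) + c * (q - p) * I) / (1 - c + c * (p + q - 2*r)) := by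
    field_simp at e2 ⊢; linarith
  rw [hJ, hI]
  field_simp
  rw [eq_div_iff (by nlinarith)]
  ring
end

section
/- For all p, q ∈ (0,1) with p ≠ q and all self-similar measures μ_p and μ_q, the first Wasserstein distance satisfies W₁(μ_p, μ_q) = ((t₂−t₁)/(1−c)) · |p−q|. -/
open MeasureTheory

/-- The first Wasserstein distance: the infimum over couplings of μ and ν of the
first moment ∫ |x − y| dγ. -/
noncomputable def wasserstein1 (μ ν : Measure ℝ) : ℝ :=
  sInf { a : ℝ | ∃ γ : Measure (ℝ × ℝ), IsProbabilityMeasure γ ∧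
    γ.map Prod.fst = μ ∧ γ.map Prod.snd = ν ∧ a = ∫ z : ℝ × ℝ, |z.1 - z.2| ∂γ }


lemma ae_mem_Icc {μ : Measure ℝ} (h : μ ((Set.Icc (0:ℝ) 1)ᶜ) = 0) :
    ∀ᵐ x ∂μ, x ∈ Set.Icc (0:ℝ) 1 := by
  rw [MeasureTheory.ae_iff]
  simpa [Set.compl_def] using h

lemma integrable_id_of {μ : Measure ℝ} [IsProbabilityMeasure μ]
    (h : μ ((Set.Icc (0:ℝ) 1)ᶜ) = 0) : Integrable (fun x : ℝ => x) μ := by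
  refine (integrable_const (1:ℝ)).mono' measurable_id.aestronglyMeasurable ?_
  filter_upwards [ae_mem_Icc h] with x hx
  rw [Real.norm_eq_abs, abs_le]
  exact ⟨by linarith [hx.1], hx.2⟩

lemma mean_eq {c t₁ t₂ : ℝ} (hc0 : 0 < c) {w : ℝ} (hw : w ∈ Set.Ioo (0:ℝ) 1)
    (μ : Measure ℝ) [IsProbabilityMeasure μ] (hsupp : μ ((Set.Icc (0:ℝ) 1)ᶜ) = 0)
    (hss : μ = ENNReal.ofReal w • μ.map (fun x : ℝ => c * x + t₁)
             + ENNReal.ofReal (1 - w) • μ.map (fun x : ℝ => c * x + t₂)) :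
    (1 - c) * ∫ x, x ∂μ = t₂ - w * (t₂ - t₁) := by
  have hI : Integrable (fun x : ℝ => x) μ := integrable_id_of hsupp
  have hmeas : ∀ t : ℝ, Measurable (fun x : ℝ => c * x + t) := fun t =>
    (measurable_id.const_mul c).add_const t
  have hint : ∀ t : ℝ, ∫ x, x ∂(μ.map (fun x : ℝ => c * x + t)) = c * (∫ x, x ∂μ) + t := by
    intro t
    rw [integral_map (f := fun x : ℝ => x) (hmeas t).aemeasurable measurable_id.aestronglyMeasurable]
    rw [integral_add (hI.const_mul c) (integrable_const t), MeasureTheory.integral_const_mul,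
      integral_const]
    simp
  have hIt : ∀ t : ℝ, Integrable (fun x : ℝ => x) (μ.map (fun x : ℝ => c * x + t)) := by
    intro t
    rw [integrable_map_measure (g := fun x : ℝ => x) measurable_id.aestronglyMeasurable (hmeas t).aemeasurable]
    simp only [Function.comp_def]
    exact (hI.const_mul c).add (integrable_const t)
  have key : ∫ x, x ∂μ = w * (c * (∫ x, x ∂μ) + t₁) + (1 - w) * (c * (∫ x, x ∂μ) + t₂) := by
    conv_lhs => rw [hss]
    rw [integral_add_measure ((hIt t₁).smul_measure ENNReal.ofReal_ne_top)
      ((hIt t₂).smul_measure ENNReal.ofReal_ne_top),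
      integral_smul_measure, integral_smul_measure, hint t₁, hint t₂,
      ENNReal.toReal_ofReal hw.1.le, ENNReal.toReal_ofReal (by linarith [hw.2])]
    simp [smul_eq_mul]
  linear_combination key

lemma coupling_ae {μ ν : Measure ℝ} {γ : Measure (ℝ × ℝ)}
    (hμ : μ ((Set.Icc (0:ℝ) 1)ᶜ) = 0) (hν : ν ((Set.Icc (0:ℝ) 1)ᶜ) = 0)
    (h1 : γ.map Prod.fst = μ) (h2 : γ.map Prod.snd = ν) :
    ∀ᵐ z : ℝ × ℝ ∂γ, z.1 ∈ Set.Icc (0:ℝ) 1 ∧ z.2 ∈ Set.Icc (0:ℝ) 1 := by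
  have e1 : γ {z : ℝ × ℝ | z.1 ∉ Set.Icc (0:ℝ) 1} = 0 := by
    have := Measure.map_apply (μ := γ) measurable_fst
      (measurableSet_Icc (a := (0:ℝ)) (b := 1)).compl
    rw [h1, hμ] at this
    simpa [Set.preimage, Set.compl_def] using this.symm
  have e2 : γ {z : ℝ × ℝ | z.2 ∉ Set.Icc (0:ℝ) 1} = 0 := by
    have := Measure.map_apply (μ := γ) measurable_snd
      (measurableSet_Icc (a := (0:ℝ)) (b := 1)).compl
    rw [h2, hν] at this
    simpa [Set.preimage, Set.compl_def] using this.symm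
  have a1 : ∀ᵐ z : ℝ × ℝ ∂γ, z.1 ∈ Set.Icc (0:ℝ) 1 := by rw [MeasureTheory.ae_iff]; exact e1
  have a2 : ∀ᵐ z : ℝ × ℝ ∂γ, z.2 ∈ Set.Icc (0:ℝ) 1 := by rw [MeasureTheory.ae_iff]; exact e2
  exact a1.and a2

lemma meas_abs_sub : Measurable (fun z : ℝ × ℝ => |z.1 - z.2|) :=
  (measurable_fst.sub measurable_snd).abs

lemma coupling_integrable {μ ν : Measure ℝ} {γ : Measure (ℝ × ℝ)} [IsFiniteMeasure γ]
    (hμ : μ ((Set.Icc (0:ℝ) 1)ᶜ) = 0) (hν : ν ((Set.Icc (0:ℝ) 1)ᶜ) = 0)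
    (h1 : γ.map Prod.fst = μ) (h2 : γ.map Prod.snd = ν) :
    Integrable (fun z : ℝ × ℝ => |z.1 - z.2|) γ ∧
      Integrable (fun z : ℝ × ℝ => z.1) γ ∧ Integrable (fun z : ℝ × ℝ => z.2) γ := by
  have hae := coupling_ae hμ hν h1 h2
  refine ⟨(integrable_const (1:ℝ)).mono' meas_abs_sub.aestronglyMeasurable ?_,
    (integrable_const (1:ℝ)).mono' measurable_fst.aestronglyMeasurable ?_,
    (integrable_const (1:ℝ)).mono' measurable_snd.aestronglyMeasurable ?_⟩
  · filter_upwards [hae] with z hz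
    obtain ⟨⟨h1a, h1b⟩, ⟨h2a, h2b⟩⟩ := hz
    rw [Real.norm_eq_abs, abs_abs, abs_le]
    constructor <;> linarith
  · filter_upwards [hae] with z hz
    obtain ⟨⟨h1a, h1b⟩, ⟨h2a, h2b⟩⟩ := hz
    rw [Real.norm_eq_abs, abs_le]
    constructor <;> linarith
  · filter_upwards [hae] with z hz
    obtain ⟨⟨h1a, h1b⟩, ⟨h2a, h2b⟩⟩ := hz
    rw [Real.norm_eq_abs, abs_le]
    constructor <;> linarith

lemma coupling_fst_integral {μ : Measure ℝ} {γ : Measure (ℝ × ℝ)}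
    (h1 : γ.map Prod.fst = μ) : ∫ z : ℝ × ℝ, z.1 ∂γ = ∫ x, x ∂μ := by
  rw [← h1, integral_map (f := fun x : ℝ => x) measurable_fst.aemeasurable
    measurable_id.aestronglyMeasurable]

lemma coupling_snd_integral {ν : Measure ℝ} {γ : Measure (ℝ × ℝ)}
    (h2 : γ.map Prod.snd = ν) : ∫ z : ℝ × ℝ, z.2 ∂γ = ∫ x, x ∂ν := by
  rw [← h2, integral_map (f := fun x : ℝ => x) measurable_snd.aemeasurable
    measurable_id.aestronglyMeasurable]

lemma cost_lb {μ ν : Measure ℝ} {γ : Measure (ℝ × ℝ)} [IsFiniteMeasure γ]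
    (hμ : μ ((Set.Icc (0:ℝ) 1)ᶜ) = 0) (hν : ν ((Set.Icc (0:ℝ) 1)ᶜ) = 0)
    (h1 : γ.map Prod.fst = μ) (h2 : γ.map Prod.snd = ν) :
    |(∫ x, x ∂μ) - ∫ x, x ∂ν| ≤ ∫ z : ℝ × ℝ, |z.1 - z.2| ∂γ := by
  obtain ⟨hf, hx, hy⟩ := coupling_integrable hμ hν h1 h2
  calc |(∫ x, x ∂μ) - ∫ x, x ∂ν| = |∫ z : ℝ × ℝ, (z.1 - z.2) ∂γ| := by
        rw [integral_sub hx hy, coupling_fst_integral h1, coupling_snd_integral h2]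
      _ ≤ ∫ z : ℝ × ℝ, |z.1 - z.2| ∂γ := by
        simpa [Real.norm_eq_abs] using
          norm_integral_le_integral_norm (μ := γ) (f := fun z : ℝ × ℝ => z.1 - z.2)


lemma pair_meas {f g : ℝ → ℝ} (hf : Measurable f) (hg : Measurable g) :
    Measurable (fun z : ℝ × ℝ => (f z.1, g z.2)) :=
  (hf.comp measurable_fst).prodMk (hg.comp measurable_snd)

lemma map_fst_pair {γ : Measure (ℝ × ℝ)} {f g : ℝ → ℝ} (hf : Measurable f) (hg : Measurable g) :
    (γ.map (fun z : ℝ × ℝ => (f z.1, g z.2))).map Prod.fst = (γ.map Prod.fst).map f := by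
  rw [Measure.map_map measurable_fst (pair_meas hf hg), Measure.map_map hf measurable_fst]
  rfl

lemma map_snd_pair {γ : Measure (ℝ × ℝ)} {f g : ℝ → ℝ} (hf : Measurable f) (hg : Measurable g) :
    (γ.map (fun z : ℝ × ℝ => (f z.1, g z.2))).map Prod.snd = (γ.map Prod.snd).map g := by
  rw [Measure.map_map measurable_snd (pair_meas hf hg), Measure.map_map hg measurable_snd]
  rfl

lemma integral_map_pair {γ : Measure (ℝ × ℝ)} {f g : ℝ → ℝ} (hf : Measurable f) (hg : Measurable g)
    (F : ℝ × ℝ → ℝ) (hF : Measurable F) :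
    ∫ z : ℝ × ℝ, F z ∂(γ.map (fun z : ℝ × ℝ => (f z.1, g z.2)))
      = ∫ z : ℝ × ℝ, F (f z.1, g z.2) ∂γ :=
  integral_map (pair_meas hf hg).aemeasurable hF.aestronglyMeasurable

lemma integrable_map_pair {γ : Measure (ℝ × ℝ)} {f g : ℝ → ℝ} (hf : Measurable f) (hg : Measurable g)
    {F : ℝ × ℝ → ℝ} (hF : Measurable F)
    (h : Integrable (fun z : ℝ × ℝ => F (f z.1, g z.2)) γ) :
    Integrable F (γ.map (fun z : ℝ × ℝ => (f z.1, g z.2))) := by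
  rw [integrable_map_measure hF.aestronglyMeasurable (pair_meas hf hg).aemeasurable]
  exact h

lemma key (c t₁ t₂ : ℝ) (hc : c ∈ Set.Ioc (0:ℝ) (1/2)) (hD : t₁ + c ≤ t₂)
    (p q : ℝ) (hp : p ∈ Set.Ioo (0:ℝ) 1) (hq : q ∈ Set.Ioo (0:ℝ) 1) (hqp : q < p)
    (μp : Measure ℝ) (hμp : IsProbabilityMeasure μp)
    (hsuppp : μp ((Set.Icc (0:ℝ) 1)ᶜ) = 0)
    (hssp : μp = ENNReal.ofReal p • μp.map (fun x : ℝ => c * x + t₁)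
               + ENNReal.ofReal (1 - p) • μp.map (fun x : ℝ => c * x + t₂))
    (μq : Measure ℝ) (hμq : IsProbabilityMeasure μq)
    (hsuppq : μq ((Set.Icc (0:ℝ) 1)ᶜ) = 0)
    (hssq : μq = ENNReal.ofReal q • μq.map (fun x : ℝ => c * x + t₁)
               + ENNReal.ofReal (1 - q) • μq.map (fun x : ℝ => c * x + t₂)) :
    wasserstein1 μp μq = (t₂ - t₁) / (1 - c) * (p - q) := by
  obtain ⟨hc0, hc2⟩ := hc
  have hc1 : c < 1 := lt_of_le_of_lt hc2 (by norm_num)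
  have hmp := mean_eq hc0 hp μp hsuppp hssp
  have hmq := mean_eq hc0 hq μq hsuppq hssq
  set mp := ∫ x, x ∂μp with hmpdef
  set mq := ∫ x, x ∂μq with hmqdef
  set S₁ : ℝ → ℝ := fun x => c * x + t₁ with hS₁
  set S₂ : ℝ → ℝ := fun x => c * x + t₂ with hS₂
  have hmS₁ : Measurable S₁ := (measurable_id.const_mul c).add_const t₁
  have hmS₂ : Measurable S₂ := (measurable_id.const_mul c).add_const t₂
  set δ := mq - mp with hδdef
  have hδ : (1 - c) * δ = (p - q) * (t₂ - t₁) := by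
    rw [hδdef]; linear_combination hmq - hmp
  have hδpos : 0 < δ := by nlinarith
  set π := μp.prod μq with hπdef
  have hπ1 : π.map Prod.fst = μp := by
    rw [hπdef, Measure.map_fst_prod, measure_univ, one_smul]
  have hπ2 : π.map Prod.snd = μq := by
    rw [hπdef, Measure.map_snd_prod, measure_univ, one_smul]
  set Φ : Measure (ℝ × ℝ) → Measure (ℝ × ℝ) := fun γ =>
    ENNReal.ofReal q • γ.map (fun z : ℝ × ℝ => (S₁ z.1, S₁ z.2))
    + ENNReal.ofReal (1 - p) • γ.map (fun z : ℝ × ℝ => (S₂ z.1, S₂ z.2))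
    + ENNReal.ofReal (p - q) • π.map (fun z : ℝ × ℝ => (S₁ z.1, S₂ z.2)) with hΦ
  have hprob : ∀ γ : Measure (ℝ × ℝ), γ.map Prod.fst = μp → IsProbabilityMeasure γ := by
    intro γ h1
    constructor
    have huniv : γ Set.univ = (γ.map Prod.fst) Set.univ := by
      rw [Measure.map_apply measurable_fst MeasurableSet.univ, Set.preimage_univ]
    rw [huniv, h1, measure_univ]
  have hmarg : ∀ γ : Measure (ℝ × ℝ), γ.map Prod.fst = μp → γ.map Prod.snd = μq →
      (Φ γ).map Prod.fst = μp ∧ (Φ γ).map Prod.snd = μq := by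
    intro γ h1 h2
    constructor
    · rw [hΦ]
      simp only
      rw [Measure.map_add _ _ measurable_fst, Measure.map_add _ _ measurable_fst,
        Measure.map_smul, Measure.map_smul, Measure.map_smul,
        map_fst_pair hmS₁ hmS₁, map_fst_pair hmS₂ hmS₂, map_fst_pair hmS₁ hmS₂,
        h1, hπ1]
      conv_rhs => rw [hssp]
      rw [add_right_comm, ← add_smul, ← ENNReal.ofReal_add hq.1.le (by linarith)]
      norm_num
    · rw [hΦ]
      simp only
      rw [Measure.map_add _ _ measurable_snd, Measure.map_add _ _ measurable_snd,
        Measure.map_smul, Measure.map_smul, Measure.map_smul,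
        map_snd_pair hmS₁ hmS₁, map_snd_pair hmS₂ hmS₂, map_snd_pair hmS₁ hmS₂,
        h2, hπ2]
      conv_rhs => rw [hssq]
      rw [add_assoc, ← add_smul, ← ENNReal.ofReal_add (by linarith [hp.2]) (by linarith),
        show (1 - p) + (p - q) = 1 - q by ring]
  -- pointwise identities
  have e11 : ∀ z : ℝ × ℝ, |S₁ z.1 - S₁ z.2| = c * |z.1 - z.2| := by
    intro z
    rw [hS₁]
    simp only
    rw [show c * z.1 + t₁ - (c * z.2 + t₁) = c * (z.1 - z.2) by ring, abs_mul,
      abs_of_pos hc0]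
  have e22 : ∀ z : ℝ × ℝ, |S₂ z.1 - S₂ z.2| = c * |z.1 - z.2| := by
    intro z
    rw [hS₂]
    simp only
    rw [show c * z.1 + t₂ - (c * z.2 + t₂) = c * (z.1 - z.2) by ring, abs_mul,
      abs_of_pos hc0]
  have hcrossae : ∀ᵐ z : ℝ × ℝ ∂π,
      |S₁ z.1 - S₂ z.2| = (c * z.2 + t₂) - (c * z.1 + t₁) := by
    filter_upwards [coupling_ae hsuppp hsuppq hπ1 hπ2] with z hz
    rw [hS₁, hS₂]
    simp only
    rw [abs_sub_comm]
    refine abs_of_nonneg ?_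
    obtain ⟨⟨ha, hb⟩, ⟨hc', hd⟩⟩ := hz
    nlinarith
  obtain ⟨hfπ, hxπ, hyπ⟩ := coupling_integrable hsuppp hsuppq hπ1 hπ2
  have hcrossint : Integrable (fun z : ℝ × ℝ => |S₁ z.1 - S₂ z.2|) π :=
    (((hyπ.const_mul c).add (integrable_const t₂)).sub
      ((hxπ.const_mul c).add (integrable_const t₁))).congr
      (by filter_upwards [hcrossae] with z hz; exact hz.symm)
  have iy2 : Integrable (fun z : ℝ × ℝ => c * z.2 + t₂) π :=
    (hyπ.const_mul c).add (integrable_const t₂)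
  have ix1 : Integrable (fun z : ℝ × ℝ => c * z.1 + t₁) π :=
    (hxπ.const_mul c).add (integrable_const t₁)
  have hcross : ∫ z : ℝ × ℝ, |S₁ z.1 - S₂ z.2| ∂π = (t₂ - t₁) + c * δ := by
    rw [integral_congr_ae hcrossae,
      integral_sub iy2 ix1,
      integral_add (hyπ.const_mul c) (integrable_const t₂),
      integral_add (hxπ.const_mul c) (integrable_const t₁),
      MeasureTheory.integral_const_mul, MeasureTheory.integral_const_mul,
      integral_const, integral_const, coupling_fst_integral hπ1, coupling_snd_integral hπ2]
    simp only [measure_univ, ENNReal.toReal_one, one_smul, probReal_univ]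
    rw [hδdef]; ring
  set a := c * (1 - (p - q)) with ha
  have hcost : ∀ γ : Measure (ℝ × ℝ), γ.map Prod.fst = μp → γ.map Prod.snd = μq →
      ∫ z : ℝ × ℝ, |z.1 - z.2| ∂(Φ γ)
        = a * ∫ z : ℝ × ℝ, |z.1 - z.2| ∂γ + (p - q) * ((t₂ - t₁) + c * δ) := by
    intro γ h1 h2
    haveI hPγ : IsProbabilityMeasure γ := hprob γ h1
    obtain ⟨hfγ, hxγ, hyγ⟩ := coupling_integrable hsuppp hsuppq h1 h2
    have i1 : Integrable (fun z : ℝ × ℝ => |z.1 - z.2|)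
        (γ.map (fun z : ℝ × ℝ => (S₁ z.1, S₁ z.2))) := by
      refine integrable_map_pair hmS₁ hmS₁ meas_abs_sub ?_
      simp only [e11]
      exact hfγ.const_mul c
    have i2 : Integrable (fun z : ℝ × ℝ => |z.1 - z.2|)
        (γ.map (fun z : ℝ × ℝ => (S₂ z.1, S₂ z.2))) := by
      refine integrable_map_pair hmS₂ hmS₂ meas_abs_sub ?_
      simp only [e22]
      exact hfγ.const_mul c
    have i3 : Integrable (fun z : ℝ × ℝ => |z.1 - z.2|)
        (π.map (fun z : ℝ × ℝ => (S₁ z.1, S₂ z.2))) := by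
      refine integrable_map_pair hmS₁ hmS₂ meas_abs_sub ?_
      simpa using hcrossint
    have I1 : ∫ z : ℝ × ℝ, |z.1 - z.2| ∂(γ.map (fun z : ℝ × ℝ => (S₁ z.1, S₁ z.2)))
        = c * ∫ z : ℝ × ℝ, |z.1 - z.2| ∂γ := by
      rw [integral_map_pair hmS₁ hmS₁ _ meas_abs_sub]
      simp only [e11]
      rw [MeasureTheory.integral_const_mul]
    have I2 : ∫ z : ℝ × ℝ, |z.1 - z.2| ∂(γ.map (fun z : ℝ × ℝ => (S₂ z.1, S₂ z.2)))
        = c * ∫ z : ℝ × ℝ, |z.1 - z.2| ∂γ := by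
      rw [integral_map_pair hmS₂ hmS₂ _ meas_abs_sub]
      simp only [e22]
      rw [MeasureTheory.integral_const_mul]
    have I3 : ∫ z : ℝ × ℝ, |z.1 - z.2| ∂(π.map (fun z : ℝ × ℝ => (S₁ z.1, S₂ z.2)))
        = (t₂ - t₁) + c * δ := by
      rw [integral_map_pair hmS₁ hmS₂ _ meas_abs_sub]
      simpa using hcross
    rw [hΦ]
    simp only
    rw [integral_add_measure
        ((i1.smul_measure ENNReal.ofReal_ne_top).add_measure
          (i2.smul_measure ENNReal.ofReal_ne_top))
        (i3.smul_measure ENNReal.ofReal_ne_top),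
      integral_add_measure (i1.smul_measure ENNReal.ofReal_ne_top)
        (i2.smul_measure ENNReal.ofReal_ne_top),
      integral_smul_measure, integral_smul_measure, integral_smul_measure,
      ENNReal.toReal_ofReal hq.1.le, ENNReal.toReal_ofReal (by linarith [hp.2] : (0:ℝ) ≤ 1 - p),
      ENNReal.toReal_ofReal (by linarith : (0:ℝ) ≤ p - q), I1, I2, I3]
    rw [ha]; simp only [smul_eq_mul]; ring
  have ha0 : 0 ≤ a := by rw [ha]; nlinarith [hp.2, hq.1]
  have ha1 : a < 1 := by rw [ha]; nlinarith [hp.2, hq.1]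
  have hfix : δ = a * δ + (p - q) * ((t₂ - t₁) + c * δ) := by
    rw [ha]; linear_combination hδ
  set C₀ := ∫ z : ℝ × ℝ, |z.1 - z.2| ∂π with hC₀
  have hiter : ∀ n : ℕ, ∃ γ : Measure (ℝ × ℝ),
      γ.map Prod.fst = μp ∧ γ.map Prod.snd = μq ∧
      ∫ z : ℝ × ℝ, |z.1 - z.2| ∂γ = δ + a ^ n * (C₀ - δ) := by
    intro n
    induction n with
    | zero => exact ⟨π, hπ1, hπ2, by rw [pow_zero, hC₀]; ring⟩
    | succ n ih =>
      obtain ⟨γ, h1, h2, hcγ⟩ := ih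
      obtain ⟨g1, g2⟩ := hmarg γ h1 h2
      refine ⟨Φ γ, g1, g2, ?_⟩
      rw [hcost γ h1 h2, hcγ, pow_succ]
      linear_combination -hfix
  set SS := { x : ℝ | ∃ γ : Measure (ℝ × ℝ), IsProbabilityMeasure γ ∧
    γ.map Prod.fst = μp ∧ γ.map Prod.snd = μq ∧
    x = ∫ z : ℝ × ℝ, |z.1 - z.2| ∂γ } with hSS
  have hlow : ∀ x ∈ SS, δ ≤ x := by
    rintro x ⟨γ, hγP, h1, h2, rfl⟩
    have hlb := cost_lb hsuppp hsuppq h1 h2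
    rw [abs_sub_comm, ← hmqdef, ← hmpdef, ← hδdef, abs_of_nonneg hδpos.le] at hlb
    exact hlb
  have hne : SS.Nonempty := ⟨C₀, π, hprob π hπ1, hπ1, hπ2, rfl⟩
  have hbdd : BddBelow SS := ⟨δ, fun x hx => hlow x hx⟩
  have hw : wasserstein1 μp μq = sInf SS := by rw [wasserstein1, hSS]
  have hub : sInf SS ≤ δ := by
    have ht : Filter.Tendsto (fun n : ℕ => δ + a ^ n * (C₀ - δ)) Filter.atTop (nhds δ) := by
      have h0 := (tendsto_pow_atTop_nhds_zero_of_lt_one ha0 ha1).mul_const (C₀ - δ)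
      have := h0.const_add δ
      simpa using this
    refine ge_of_tendsto' ht ?_
    intro n
    obtain ⟨γ, h1, h2, hcγ⟩ := hiter n
    exact csInf_le hbdd ⟨γ, hprob γ h1, h1, h2, hcγ.symm⟩
  have hlb : δ ≤ sInf SS := le_csInf hne hlow
  rw [hw, le_antisymm hub hlb]
  have h1c : (1:ℝ) - c ≠ 0 := by linarith
  field_simp
  linear_combination hδ

lemma w1_symm (μ ν : Measure ℝ) : wasserstein1 μ ν = wasserstein1 ν μ := by
  have hsub : ∀ μ ν : Measure ℝ,
      { a : ℝ | ∃ γ : Measure (ℝ × ℝ), IsProbabilityMeasure γ ∧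
        γ.map Prod.fst = μ ∧ γ.map Prod.snd = ν ∧ a = ∫ z : ℝ × ℝ, |z.1 - z.2| ∂γ } ⊆
      { a : ℝ | ∃ γ : Measure (ℝ × ℝ), IsProbabilityMeasure γ ∧
        γ.map Prod.fst = ν ∧ γ.map Prod.snd = μ ∧ a = ∫ z : ℝ × ℝ, |z.1 - z.2| ∂γ } := by
    rintro μ ν x ⟨γ, hP, h1, h2, rfl⟩
    refine ⟨γ.map Prod.swap, Measure.isProbabilityMeasure_map measurable_swap.aemeasurable, ?_, ?_, ?_⟩
    · rw [Measure.map_map measurable_fst measurable_swap]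
      rw [show (Prod.fst ∘ Prod.swap : ℝ × ℝ → ℝ) = Prod.snd from rfl]
      exact h2
    · rw [Measure.map_map measurable_snd measurable_swap]
      rw [show (Prod.snd ∘ Prod.swap : ℝ × ℝ → ℝ) = Prod.fst from rfl]
      exact h1
    · rw [integral_map measurable_swap.aemeasurable meas_abs_sub.aestronglyMeasurable]
      simp_rw [Prod.fst_swap, Prod.snd_swap]
      exact integral_congr_ae (Filter.Eventually.of_forall fun z => abs_sub_comm _ _)
  rw [wasserstein1, wasserstein1, Set.Subset.antisymm (hsub μ ν) (hsub ν μ)]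


/-- Corollary 2.6: exact value of the first Wasserstein distance between two
self-similar measures. -/
theorem wasserstein1_self_similar
    (c t₁ t₂ : ℝ) (hc : c ∈ Set.Ioc (0:ℝ) (1/2))
    (ht₁ : t₁ ∈ Set.Icc (0:ℝ) (1 - 2*c)) (ht₂ : t₂ ∈ Set.Icc (t₁ + c) (1 - c))
    (p q : ℝ) (hp : p ∈ Set.Ioo (0:ℝ) 1) (hq : q ∈ Set.Ioo (0:ℝ) 1) (hpq : p ≠ q)
    (μp : Measure ℝ) (hμp : IsProbabilityMeasure μp)
    (hsuppp : μp ((Set.Icc (0:ℝ) 1)ᶜ) = 0)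
    (hssp : μp = ENNReal.ofReal p • μp.map (fun x : ℝ => c * x + t₁)
               + ENNReal.ofReal (1 - p) • μp.map (fun x : ℝ => c * x + t₂))
    (μq : Measure ℝ) (hμq : IsProbabilityMeasure μq)
    (hsuppq : μq ((Set.Icc (0:ℝ) 1)ᶜ) = 0)
    (hssq : μq = ENNReal.ofReal q • μq.map (fun x : ℝ => c * x + t₁)
               + ENNReal.ofReal (1 - q) • μq.map (fun x : ℝ => c * x + t₂)) :
    wasserstein1 μp μq = (t₂ - t₁) / (1 - c) * |p - q| := by
  rcases hpq.lt_or_gt with h | h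
  · rw [w1_symm,
      key c t₁ t₂ hc ht₂.1 q p hq hp h μq hμq hsuppq hssq μp hμp hsuppp hssp,
      abs_of_neg (by linarith : p - q < 0)]
    ring
  · rw [key c t₁ t₂ hc ht₂.1 p q hp hq h μp hμp hsuppp hssp μq hμq hsuppq hssq,
      abs_of_pos (by linarith : 0 < p - q)]
end

section
/- For all p, q ∈ (0,1) with p ≠ q and all self-similar measures μ_p and μ_q, the infimum over all couplings γ of μ_p and μ_q of the second moment ∫ |x−y|² dγ(x,y) satisfies ((t₂−t₁)/(1−c))² (p−q)² ≤ inf_γ ∫ |x−y|² dγ(x,y) ≤ ((t₂−t₁)/(1−c))² · (2c(p−q)² + (1−c)|p−q|)/(1+c); equivalently, the second Wasserstein distance W₂(μ_p, μ_q) satisfies ((t₂−t₁)/(1−c))|p−q| ≤ W₂(μ_p, μ_q) ≤ ((t₂−t₁)/(1−c)) √((2c(p−q)² + (1−c)|p−q|)/(1+c)). -/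
open MeasureTheory

open Filter

/-- The infimum over couplings of μ and ν of the second moment ∫ |x − y|² dγ. -/
noncomputable def secondMomentInf (μ ν : Measure ℝ) : ℝ :=
  sInf { a : ℝ | ∃ γ : Measure (ℝ × ℝ), IsProbabilityMeasure γ ∧
    γ.map Prod.fst = μ ∧ γ.map Prod.snd = ν ∧ a = ∫ z : ℝ × ℝ, |z.1 - z.2|^2 ∂γ }

/-- The second Wasserstein distance. -/
noncomputable def wasserstein2 (μ ν : Measure ℝ) : ℝ :=
  Real.sqrt (secondMomentInf μ ν)

namespace W2Aux

/-- The set of coupling costs. -/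
def cSet (μ ν : Measure ℝ) : Set ℝ :=
  { a : ℝ | ∃ γ : Measure (ℝ × ℝ), IsProbabilityMeasure γ ∧
    γ.map Prod.fst = μ ∧ γ.map Prod.snd = ν ∧ a = ∫ z : ℝ × ℝ, |z.1 - z.2|^2 ∂γ }

lemma gcont : Continuous (fun z : ℝ × ℝ => |z.1 - z.2|^2) :=
  ((continuous_fst.sub continuous_snd).abs).pow 2

lemma cSet_nonneg {μ ν : Measure ℝ} {a : ℝ} (ha : a ∈ cSet μ ν) : 0 ≤ a := by
  obtain ⟨γ, _, _, _, rfl⟩ := ha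
  exact integral_nonneg fun z => by positivity

lemma cSet_bddBelow (μ ν : Measure ℝ) : BddBelow (cSet μ ν) :=
  ⟨0, fun a ha => cSet_nonneg ha⟩

/-- a.e. membership of the coupling in the unit square. -/
lemma coupling_ae {μ ν : Measure ℝ} (hμ : μ ((Set.Icc (0:ℝ) 1)ᶜ) = 0)
    (hν : ν ((Set.Icc (0:ℝ) 1)ᶜ) = 0) {γ : Measure (ℝ × ℝ)}
    (h1 : γ.map Prod.fst = μ) (h2 : γ.map Prod.snd = ν) :
    ∀ᵐ z : ℝ × ℝ ∂γ, z.1 ∈ Set.Icc (0:ℝ) 1 ∧ z.2 ∈ Set.Icc (0:ℝ) 1 := by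
  have e1 : γ (Prod.fst ⁻¹' (Set.Icc (0:ℝ) 1)ᶜ) = 0 := by
    rw [← Measure.map_apply measurable_fst measurableSet_Icc.compl, h1]; exact hμ
  have e2 : γ (Prod.snd ⁻¹' (Set.Icc (0:ℝ) 1)ᶜ) = 0 := by
    rw [← Measure.map_apply measurable_snd measurableSet_Icc.compl, h2]; exact hν
  rw [ae_iff]
  refine measure_mono_null (fun z hz => ?_) (measure_union_null e1 e2)
  simp only [Set.mem_setOf_eq, not_and_or] at hz
  rcases hz with hz | hz
  · exact Or.inl hz
  · exact Or.inr hz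

/-- a.e. bound |z.1 - z.2| ≤ 1. -/
lemma coupling_ae_bound {μ ν : Measure ℝ} (hμ : μ ((Set.Icc (0:ℝ) 1)ᶜ) = 0)
    (hν : ν ((Set.Icc (0:ℝ) 1)ᶜ) = 0) {γ : Measure (ℝ × ℝ)}
    (h1 : γ.map Prod.fst = μ) (h2 : γ.map Prod.snd = ν) :
    ∀ᵐ z : ℝ × ℝ ∂γ, |z.1 - z.2| ≤ 1 := by
  filter_upwards [coupling_ae hμ hν h1 h2] with z hz
  obtain ⟨⟨a1, a2⟩, ⟨b1, b2⟩⟩ := hz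
  rw [abs_le]; constructor <;> linarith

lemma integrable_id_of_supp {μ : Measure ℝ} [IsProbabilityMeasure μ]
    (hsupp : μ ((Set.Icc (0:ℝ) 1)ᶜ) = 0) : Integrable (fun x : ℝ => x) μ := by
  have hb : ∀ᵐ x ∂μ, ‖x‖ ≤ 1 := by
    have : ∀ᵐ x ∂μ, x ∈ Set.Icc (0:ℝ) 1 := by
      rw [ae_iff]
      refine measure_mono_null (fun x hx => ?_) hsupp
      simpa using hx
    filter_upwards [this] with x hx
    rw [Real.norm_eq_abs, abs_le]
    exact ⟨by linarith [hx.1], hx.2⟩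
  exact Integrable.mono' (integrable_const 1) measurable_id.aestronglyMeasurable hb

/-- The mean of a self-similar measure. -/
lemma mean_eq {c t₁ t₂ r : ℝ} (hc1 : c < 1) (hr0 : 0 ≤ r) (hr1 : r ≤ 1)
    {μ : Measure ℝ} [IsProbabilityMeasure μ]
    (hid : Integrable (fun x : ℝ => x) μ)
    (hss : μ = ENNReal.ofReal r • μ.map (fun x : ℝ => c * x + t₁)
             + ENNReal.ofReal (1 - r) • μ.map (fun x : ℝ => c * x + t₂)) :
    (1 - c) * ∫ x, x ∂μ = r * t₁ + (1 - r) * t₂ := by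
  set m := ∫ x, x ∂μ with hm
  have hmeas1 : Measurable (fun x : ℝ => c * x + t₁) := by fun_prop
  have hmeas2 : Measurable (fun x : ℝ => c * x + t₂) := by fun_prop
  have hS1 : Integrable (fun x : ℝ => c * x + t₁) μ :=
    (hid.const_mul c).add (integrable_const t₁)
  have hS2 : Integrable (fun x : ℝ => c * x + t₂) μ :=
    (hid.const_mul c).add (integrable_const t₂)
  have hmap1 : Integrable (fun x : ℝ => x) (μ.map (fun x : ℝ => c * x + t₁)) := by
    rw [integrable_map_measure measurable_id'.aestronglyMeasurable hmeas1.aemeasurable]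
    exact hS1
  have hmap2 : Integrable (fun x : ℝ => x) (μ.map (fun x : ℝ => c * x + t₂)) := by
    rw [integrable_map_measure measurable_id'.aestronglyMeasurable hmeas2.aemeasurable]
    exact hS2
  have hint1 : ∫ x, x ∂(μ.map (fun x : ℝ => c * x + t₁)) = c * m + t₁ := by
    rw [integral_map hmeas1.aemeasurable measurable_id'.aestronglyMeasurable,
      integral_add (hid.const_mul c) (integrable_const t₁), integral_const_mul c _,
      integral_const, probReal_univ]
    simp [hm]
  have hint2 : ∫ x, x ∂(μ.map (fun x : ℝ => c * x + t₂)) = c * m + t₂ := by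
    rw [integral_map hmeas2.aemeasurable measurable_id'.aestronglyMeasurable,
      integral_add (hid.const_mul c) (integrable_const t₂), integral_const_mul c _,
      integral_const, probReal_univ]
    simp [hm]
  have key : m = r * (c * m + t₁) + (1 - r) * (c * m + t₂) := by
    conv_lhs => rw [hm, hss]
    rw [integral_add_measure (hmap1.smul_measure ENNReal.ofReal_ne_top)
      (hmap2.smul_measure ENNReal.ofReal_ne_top),
      integral_smul_measure, integral_smul_measure,
      ENNReal.toReal_ofReal hr0, ENNReal.toReal_ofReal (by linarith : (0:ℝ) ≤ 1 - r),
      hint1, hint2]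
    simp [smul_eq_mul]
  nlinarith [key]
lemma element_ge {μ ν : Measure ℝ}
    (hμs : μ ((Set.Icc (0:ℝ) 1)ᶜ) = 0) (hνs : ν ((Set.Icc (0:ℝ) 1)ᶜ) = 0)
    {a : ℝ} (ha : a ∈ cSet μ ν) :
    ((∫ x, x ∂μ) - ∫ x, x ∂ν)^2 ≤ a := by
  obtain ⟨γ, hγ, h1, h2, rfl⟩ := ha
  have hbd := (by
    filter_upwards [coupling_ae hμs hνs h1 h2] with z hz
    obtain ⟨⟨a1, a2⟩, ⟨b1, b2⟩⟩ := hz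
    rw [Real.norm_eq_abs, abs_le]; constructor <;> linarith :
    ∀ᵐ z : ℝ × ℝ ∂γ, ‖z.1 - z.2‖ ≤ 1)
  have hfm : AEStronglyMeasurable (fun z : ℝ × ℝ => z.1 - z.2) γ :=
    (measurable_fst.sub measurable_snd).aestronglyMeasurable
  have hmem : MemLp (fun z : ℝ × ℝ => z.1 - z.2) 2 γ := MemLp.of_bound hfm 1 hbd
  have hvar := ProbabilityTheory.variance_nonneg (fun z : ℝ × ℝ => z.1 - z.2) γ
  rw [ProbabilityTheory.variance_eq_sub hmem] at hvar
  have hsq : ∫ z : ℝ × ℝ, |z.1 - z.2|^2 ∂γ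
      = ∫ z : ℝ × ℝ, ((fun z : ℝ × ℝ => z.1 - z.2)^2) z ∂γ := by
    congr 1; funext z; simp [sq_abs]
  have hfi : Integrable (fun z : ℝ × ℝ => z.1 - z.2) γ :=
    Integrable.mono' (integrable_const 1) hfm hbd
  have hmean : ∫ z : ℝ × ℝ, z.1 - z.2 ∂γ = (∫ x, x ∂μ) - ∫ x, x ∂ν := by
    have e1 : ∫ z : ℝ × ℝ, z.1 ∂γ = ∫ x, x ∂μ := by
      rw [← h1, integral_map measurable_fst.aemeasurable
        measurable_id'.aestronglyMeasurable]
    have e2 : ∫ z : ℝ × ℝ, z.2 ∂γ = ∫ x, x ∂ν := by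
      rw [← h2, integral_map measurable_snd.aemeasurable
        measurable_id'.aestronglyMeasurable]
    have hfst : Integrable (fun z : ℝ × ℝ => z.1) γ := by
      refine Integrable.mono' (integrable_const 1) measurable_fst.aestronglyMeasurable ?_
      filter_upwards [coupling_ae hμs hνs h1 h2] with z hz
      rw [Real.norm_eq_abs, abs_le]; exact ⟨by linarith [hz.1.1], hz.1.2⟩
    have hsnd : Integrable (fun z : ℝ × ℝ => z.2) γ := by
      refine Integrable.mono' (integrable_const 1) measurable_snd.aestronglyMeasurable ?_
      filter_upwards [coupling_ae hμs hνs h1 h2] with z hz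
      rw [Real.norm_eq_abs, abs_le]; exact ⟨by linarith [hz.2.1], hz.2.2⟩
    rw [integral_sub hfst hsnd, e1, e2]
  rw [hsq]
  rw [hmean] at hvar
  linarith

lemma cSet_subset (μ ν : Measure ℝ) : cSet μ ν ⊆ cSet ν μ := by
  rintro a ⟨γ, hγ, h1, h2, rfl⟩
  refine ⟨γ.map Prod.swap, Measure.isProbabilityMeasure_map measurable_swap.aemeasurable, ?_, ?_, ?_⟩
  · rw [Measure.map_map measurable_fst measurable_swap]
    exact h2
  · rw [Measure.map_map measurable_snd measurable_swap]
    exact h1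
  · rw [integral_map measurable_swap.aemeasurable gcont.aestronglyMeasurable]
    simp only [Prod.fst_swap, Prod.snd_swap]
    congr 1; funext z; rw [abs_sub_comm]

lemma cSet_comm (μ ν : Measure ℝ) : cSet μ ν = cSet ν μ :=
  Set.Subset.antisymm (cSet_subset μ ν) (cSet_subset ν μ)

section
variable {μ ν : Measure ℝ}

lemma coupling_fst_int (hμs : μ ((Set.Icc (0:ℝ) 1)ᶜ) = 0) (hνs : ν ((Set.Icc (0:ℝ) 1)ᶜ) = 0)
    {γ : Measure (ℝ × ℝ)} [IsProbabilityMeasure γ]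
    (h1 : γ.map Prod.fst = μ) (h2 : γ.map Prod.snd = ν) :
    Integrable (fun z : ℝ × ℝ => z.1) γ ∧ Integrable (fun z : ℝ × ℝ => z.2) γ := by
  constructor
  · refine Integrable.mono' (integrable_const 1) measurable_fst.aestronglyMeasurable ?_
    filter_upwards [coupling_ae hμs hνs h1 h2] with z hz
    rw [Real.norm_eq_abs, abs_le]; exact ⟨by linarith [hz.1.1], hz.1.2⟩
  · refine Integrable.mono' (integrable_const 1) measurable_snd.aestronglyMeasurable ?_
    filter_upwards [coupling_ae hμs hνs h1 h2] with z hz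
    rw [Real.norm_eq_abs, abs_le]; exact ⟨by linarith [hz.2.1], hz.2.2⟩

lemma coupling_mean (hμs : μ ((Set.Icc (0:ℝ) 1)ᶜ) = 0) (hνs : ν ((Set.Icc (0:ℝ) 1)ᶜ) = 0)
    {γ : Measure (ℝ × ℝ)} [IsProbabilityMeasure γ]
    (h1 : γ.map Prod.fst = μ) (h2 : γ.map Prod.snd = ν) :
    ∫ z : ℝ × ℝ, (z.1 - z.2) ∂γ = (∫ x, x ∂μ) - ∫ x, x ∂ν := by
  obtain ⟨hfst, hsnd⟩ := coupling_fst_int hμs hνs h1 h2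
  have e1 : ∫ z : ℝ × ℝ, z.1 ∂γ = ∫ x, x ∂μ := by
    rw [← h1, integral_map measurable_fst.aemeasurable measurable_id'.aestronglyMeasurable]
  have e2 : ∫ z : ℝ × ℝ, z.2 ∂γ = ∫ x, x ∂ν := by
    rw [← h2, integral_map measurable_snd.aemeasurable measurable_id'.aestronglyMeasurable]
  rw [integral_sub hfst hsnd, e1, e2]

end

lemma recursion_step {c t₁ t₂ p q : ℝ}
    (hc : c ∈ Set.Ioc (0:ℝ) (1/2))
    (ht₁ : t₁ ∈ Set.Icc (0:ℝ) (1 - 2*c)) (ht₂ : t₂ ∈ Set.Icc (t₁ + c) (1 - c))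
    (hp : p ∈ Set.Ioo (0:ℝ) 1) (hq : q ∈ Set.Ioo (0:ℝ) 1) (hqp : q < p)
    {μp μq : Measure ℝ} [IsProbabilityMeasure μp] [IsProbabilityMeasure μq]
    (hsuppp : μp ((Set.Icc (0:ℝ) 1)ᶜ) = 0) (hsuppq : μq ((Set.Icc (0:ℝ) 1)ᶜ) = 0)
    (hssp : μp = ENNReal.ofReal p • μp.map (fun x : ℝ => c * x + t₁)
               + ENNReal.ofReal (1 - p) • μp.map (fun x : ℝ => c * x + t₂))
    (hssq : μq = ENNReal.ofReal q • μq.map (fun x : ℝ => c * x + t₁)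
               + ENNReal.ofReal (1 - q) • μq.map (fun x : ℝ => c * x + t₂))
    {a : ℝ} (ha : a ∈ cSet μp μq) :
    c^2 * a + (p - q) * ((t₂ - t₁)^2 - 2*c*(t₂ - t₁)*((∫ x, x ∂μp) - ∫ x, x ∂μq))
      ∈ cSet μp μq := by
  obtain ⟨hc0, hc2⟩ := hc
  obtain ⟨γ, hγ, h1, h2, hcost⟩ := ha
  set f11 : ℝ × ℝ → ℝ × ℝ := fun z => (c * z.1 + t₁, c * z.2 + t₁) with hf11def
  set f22 : ℝ × ℝ → ℝ × ℝ := fun z => (c * z.1 + t₂, c * z.2 + t₂) with hf22def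
  set f12 : ℝ × ℝ → ℝ × ℝ := fun z => (c * z.1 + t₁, c * z.2 + t₂) with hf12def
  have hf11 : Measurable f11 := by fun_prop
  have hf22 : Measurable f22 := by fun_prop
  have hf12 : Measurable f12 := by fun_prop
  have hmeas1 : Measurable (fun x : ℝ => c * x + t₁) := by fun_prop
  have hmeas2 : Measurable (fun x : ℝ => c * x + t₂) := by fun_prop
  set γ' : Measure (ℝ × ℝ) := ENNReal.ofReal q • γ.map f11
      + ENNReal.ofReal (1 - p) • γ.map f22 + ENNReal.ofReal (p - q) • γ.map f12 with hγ'def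
  -- probability
  have huniv : ∀ (f : ℝ × ℝ → ℝ × ℝ), Measurable f → γ.map f Set.univ = 1 := by
    intro f hf
    rw [Measure.map_apply hf MeasurableSet.univ, Set.preimage_univ, measure_univ]
  have hγ'prob : IsProbabilityMeasure γ' := by
    constructor
    simp only [hγ'def, Measure.add_apply, Measure.smul_apply, huniv _ hf11, huniv _ hf22,
      huniv _ hf12, smul_eq_mul, mul_one]
    rw [← ENNReal.ofReal_add (by linarith [hq.1]) (by linarith [hp.2]),
      ← ENNReal.ofReal_add (by linarith [hq.1, hp.2]) (by linarith)]
    rw [show q + (1 - p) + (p - q) = 1 by ring, ENNReal.ofReal_one]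
  -- marginals
  have hmfst : γ'.map Prod.fst = μp := by
    rw [hγ'def, Measure.map_add _ _ measurable_fst, Measure.map_add _ _ measurable_fst,
      Measure.map_smul, Measure.map_smul, Measure.map_smul,
      Measure.map_map measurable_fst hf11, Measure.map_map measurable_fst hf22,
      Measure.map_map measurable_fst hf12]
    have e11 : Prod.fst ∘ f11 = (fun x : ℝ => c * x + t₁) ∘ Prod.fst := rfl
    have e22 : Prod.fst ∘ f22 = (fun x : ℝ => c * x + t₂) ∘ Prod.fst := rfl
    have e12 : Prod.fst ∘ f12 = (fun x : ℝ => c * x + t₁) ∘ Prod.fst := rfl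
    rw [e11, e22, e12, ← Measure.map_map hmeas1 measurable_fst,
      ← Measure.map_map hmeas2 measurable_fst, h1]
    rw [add_right_comm, ← add_smul,
      ← ENNReal.ofReal_add (le_of_lt hq.1) (by linarith), show q + (p - q) = p by ring]
    exact hssp.symm
  have hmsnd : γ'.map Prod.snd = μq := by
    rw [hγ'def, Measure.map_add _ _ measurable_snd, Measure.map_add _ _ measurable_snd,
      Measure.map_smul, Measure.map_smul, Measure.map_smul,
      Measure.map_map measurable_snd hf11, Measure.map_map measurable_snd hf22,
      Measure.map_map measurable_snd hf12]
    have e11 : Prod.snd ∘ f11 = (fun x : ℝ => c * x + t₁) ∘ Prod.snd := rfl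
    have e22 : Prod.snd ∘ f22 = (fun x : ℝ => c * x + t₂) ∘ Prod.snd := rfl
    have e12 : Prod.snd ∘ f12 = (fun x : ℝ => c * x + t₂) ∘ Prod.snd := rfl
    rw [e11, e22, e12, ← Measure.map_map hmeas1 measurable_snd,
      ← Measure.map_map hmeas2 measurable_snd, h2]
    rw [add_assoc, ← add_smul,
      ← ENNReal.ofReal_add (by linarith [hp.2]) (by linarith),
      show 1 - p + (p - q) = 1 - q by ring]
    exact hssq.symm
  -- integrability facts
  have habs : ∀ᵐ z : ℝ × ℝ ∂γ, |z.1 - z.2| ≤ 1 := coupling_ae_bound hsuppp hsuppq h1 h2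
  have hgγ : Integrable (fun z : ℝ × ℝ => |z.1 - z.2|^2) γ := by
    refine Integrable.mono' (integrable_const 1) gcont.aestronglyMeasurable ?_
    filter_upwards [habs] with z hz
    rw [Real.norm_eq_abs, abs_of_nonneg (by positivity)]
    nlinarith [abs_nonneg (z.1 - z.2)]
  have hvγ : Integrable (fun z : ℝ × ℝ => z.1 - z.2) γ := by
    refine Integrable.mono' (integrable_const 1)
      (measurable_fst.sub measurable_snd).aestronglyMeasurable ?_
    filter_upwards [habs] with z hz
    rw [Real.norm_eq_abs]; exact hz
  have htb : |t₁ - t₂| ≤ 1 := by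
    rw [abs_le]; constructor <;> [nlinarith [ht₁.1, ht₂.2]; nlinarith [ht₂.1]]
  have hcomp : ∀ ta tb : ℝ, |ta - tb| ≤ 1 →
      Integrable ((fun z : ℝ × ℝ => |z.1 - z.2|^2) ∘
        (fun z : ℝ × ℝ => (c * z.1 + ta, c * z.2 + tb))) γ := by
    intro ta tb htab
    refine Integrable.mono' (integrable_const 4) ?_ ?_
    · exact (gcont.comp (by fun_prop : Continuous fun z : ℝ × ℝ =>
        (c * z.1 + ta, c * z.2 + tb))).aestronglyMeasurable
    · filter_upwards [habs] with z hz
      simp only [Function.comp_apply]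
      have hey : |c * z.1 + ta - (c * z.2 + tb)| ≤ 2 := by
        have e : c * z.1 + ta - (c * z.2 + tb) = c * (z.1 - z.2) + (ta - tb) := by ring
        rw [e]
        calc |c * (z.1 - z.2) + (ta - tb)| ≤ |c * (z.1 - z.2)| + |ta - tb| := abs_add_le _ _
          _ ≤ 2 := by
            rw [abs_mul, abs_of_pos hc0]
            nlinarith [abs_nonneg (z.1 - z.2)]
      rw [Real.norm_eq_abs, abs_of_nonneg (by positivity)]
      nlinarith [abs_nonneg (c * z.1 + ta - (c * z.2 + tb))]
  have hcomp11 := hcomp t₁ t₁ (by simp)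
  have hcomp22 := hcomp t₂ t₂ (by simp)
  have hcomp12 := hcomp t₁ t₂ htb
  have hmap11 : Integrable (fun z : ℝ × ℝ => |z.1 - z.2|^2) (γ.map f11) :=
    (integrable_map_measure gcont.aestronglyMeasurable hf11.aemeasurable).mpr hcomp11
  have hmap22 : Integrable (fun z : ℝ × ℝ => |z.1 - z.2|^2) (γ.map f22) :=
    (integrable_map_measure gcont.aestronglyMeasurable hf22.aemeasurable).mpr hcomp22
  have hmap12 : Integrable (fun z : ℝ × ℝ => |z.1 - z.2|^2) (γ.map f12) :=
    (integrable_map_measure gcont.aestronglyMeasurable hf12.aemeasurable).mpr hcomp12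
  -- integrals over the mapped measures
  have hi11 : ∫ z : ℝ × ℝ, |z.1 - z.2|^2 ∂(γ.map f11) = c^2 * a := by
    rw [integral_map hf11.aemeasurable gcont.aestronglyMeasurable]
    have e : ∀ z : ℝ × ℝ, |(f11 z).1 - (f11 z).2|^2 = c^2 * |z.1 - z.2|^2 := by
      intro z; simp only [hf11def]; rw [sq_abs, sq_abs]; ring
    simp only [e]
    rw [integral_const_mul, ← hcost]
  have hi22 : ∫ z : ℝ × ℝ, |z.1 - z.2|^2 ∂(γ.map f22) = c^2 * a := by
    rw [integral_map hf22.aemeasurable gcont.aestronglyMeasurable]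
    have e : ∀ z : ℝ × ℝ, |(f22 z).1 - (f22 z).2|^2 = c^2 * |z.1 - z.2|^2 := by
      intro z; simp only [hf22def]; rw [sq_abs, sq_abs]; ring
    simp only [e]
    rw [integral_const_mul, ← hcost]
  have hmean : ∫ z : ℝ × ℝ, (z.1 - z.2) ∂γ = (∫ x, x ∂μp) - ∫ x, x ∂μq :=
    coupling_mean hsuppp hsuppq h1 h2
  have hi12 : ∫ z : ℝ × ℝ, |z.1 - z.2|^2 ∂(γ.map f12)
      = c^2 * a + ((-(2 * c * (t₂ - t₁))) * ((∫ x, x ∂μp) - ∫ x, x ∂μq) + (t₂ - t₁)^2) := by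
    rw [integral_map hf12.aemeasurable gcont.aestronglyMeasurable]
    have e : ∀ z : ℝ × ℝ, |(f12 z).1 - (f12 z).2|^2
        = c^2 * |z.1 - z.2|^2 + ((-(2 * c * (t₂ - t₁))) * (z.1 - z.2) + (t₂ - t₁)^2) := by
      intro z; simp only [hf12def]; rw [sq_abs, sq_abs]; ring
    simp only [e]
    have hA : Integrable (fun z : ℝ × ℝ => c^2 * |z.1 - z.2|^2) γ := hgγ.const_mul _
    have hB1 : Integrable (fun z : ℝ × ℝ => (-(2 * c * (t₂ - t₁))) * (z.1 - z.2)) γ :=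
      hvγ.const_mul _
    have hB : Integrable
        (fun z : ℝ × ℝ => (-(2 * c * (t₂ - t₁))) * (z.1 - z.2) + (t₂ - t₁)^2) γ :=
      hB1.add (integrable_const _)
    rw [integral_add hA hB, integral_const_mul, integral_add hB1 (integrable_const _),
      integral_const_mul, integral_const, probReal_univ, hmean, ← hcost]
    simp
  -- total cost
  refine ⟨γ', hγ'prob, hmfst, hmsnd, ?_⟩
  have hint12' : Integrable (fun z : ℝ × ℝ => |z.1 - z.2|^2) (ENNReal.ofReal (p - q) • γ.map f12) := hmap12.smul_measure ENNReal.ofReal_ne_top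
  have hsum : ∫ z : ℝ × ℝ, |z.1 - z.2|^2 ∂γ'
      = q * (c^2 * a) + (1 - p) * (c^2 * a) + (p - q) *
        (c^2 * a + ((-(2 * c * (t₂ - t₁))) * ((∫ x, x ∂μp) - ∫ x, x ∂μq) + (t₂ - t₁)^2)) := by
    rw [hγ'def,
      integral_add_measure
        ((hmap11.smul_measure ENNReal.ofReal_ne_top).add_measure
          (hmap22.smul_measure ENNReal.ofReal_ne_top)) hint12',
      integral_add_measure (hmap11.smul_measure ENNReal.ofReal_ne_top)
        (hmap22.smul_measure ENNReal.ofReal_ne_top),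
      integral_smul_measure, integral_smul_measure, integral_smul_measure,
      ENNReal.toReal_ofReal (le_of_lt hq.1), ENNReal.toReal_ofReal (by linarith [hp.2]),
      ENNReal.toReal_ofReal (by linarith), hi11, hi22, hi12]
    simp [smul_eq_mul]
  rw [hsum]; ring

lemma cSet_nonempty (μ ν : Measure ℝ) [IsProbabilityMeasure μ] [IsProbabilityMeasure ν] :
    (cSet μ ν).Nonempty := by
  refine ⟨_, μ.prod ν, inferInstance, ?_, ?_, rfl⟩
  · rw [Measure.map_fst_prod]; simp
  · rw [Measure.map_snd_prod]; simp

lemma upper_aux {c t₁ t₂ p q : ℝ}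
    (hc : c ∈ Set.Ioc (0:ℝ) (1/2))
    (ht₁ : t₁ ∈ Set.Icc (0:ℝ) (1 - 2*c)) (ht₂ : t₂ ∈ Set.Icc (t₁ + c) (1 - c))
    (hp : p ∈ Set.Ioo (0:ℝ) 1) (hq : q ∈ Set.Ioo (0:ℝ) 1) (hqp : q < p)
    {μp μq : Measure ℝ} [IsProbabilityMeasure μp] [IsProbabilityMeasure μq]
    (hsuppp : μp ((Set.Icc (0:ℝ) 1)ᶜ) = 0) (hsuppq : μq ((Set.Icc (0:ℝ) 1)ᶜ) = 0)
    (hssp : μp = ENNReal.ofReal p • μp.map (fun x : ℝ => c * x + t₁)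
               + ENNReal.ofReal (1 - p) • μp.map (fun x : ℝ => c * x + t₂))
    (hssq : μq = ENNReal.ofReal q • μq.map (fun x : ℝ => c * x + t₁)
               + ENNReal.ofReal (1 - q) • μq.map (fun x : ℝ => c * x + t₂)) :
    sInf (cSet μp μq)
      ≤ ((t₂ - t₁) / (1 - c))^2 * ((2 * c * (p - q)^2 + (1 - c) * |p - q|) / (1 + c)) := by
  have hc0 := hc.1
  have hc2 := hc.2
  have h1c : (0:ℝ) < 1 - c := by linarith
  have hMp := mean_eq (by linarith : c < 1) hp.1.le hp.2.le (integrable_id_of_supp hsuppp) hssp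
  have hMq := mean_eq (by linarith : c < 1) hq.1.le hq.2.le (integrable_id_of_supp hsuppq) hssq
  have hM : (∫ x, x ∂μp) - ∫ x, x ∂μq = (p - q) * (t₁ - t₂) / (1 - c) := by
    rw [eq_div_iff h1c.ne']
    linear_combination hMp - hMq
  set Cs : ℝ := ((t₂ - t₁) / (1 - c))^2 * ((2 * c * (p - q)^2 + (1 - c) * (p - q)) / (1 + c))
    with hCs
  have hK : (p - q) * ((t₂ - t₁)^2 - 2*c*(t₂ - t₁)*((∫ x, x ∂μp) - ∫ x, x ∂μq))
      = (1 - c^2) * Cs := by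
    rw [hM, hCs]
    have h1pc : (1:ℝ) + c ≠ 0 := by linarith
    field_simp
    ring
  obtain ⟨a₀, ha₀⟩ := cSet_nonempty μp μq
  have hmem : ∀ n : ℕ, (c^2)^n * (a₀ - Cs) + Cs ∈ cSet μp μq := by
    intro n
    induction n with
    | zero =>
      have e0 : (c^2)^0 * (a₀ - Cs) + Cs = a₀ := by ring
      rw [e0]; exact ha₀
    | succ n ih =>
      have e : (c^2)^(n+1) * (a₀ - Cs) + Cs
          = c^2 * ((c^2)^n * (a₀ - Cs) + Cs) + (1 - c^2) * Cs := by ring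
      rw [e, ← hK]
      exact recursion_step hc ht₁ ht₂ hp hq hqp hsuppp hsuppq hssp hssq ih
  have hle : ∀ n : ℕ, sInf (cSet μp μq) ≤ (c^2)^n * (a₀ - Cs) + Cs :=
    fun n => csInf_le (cSet_bddBelow _ _) (hmem n)
  have h0 : Tendsto (fun n : ℕ => (c^2)^n) atTop (nhds 0) :=
    tendsto_pow_atTop_nhds_zero_of_lt_one (by positivity) (by nlinarith)
  have htend : Tendsto (fun n : ℕ => (c^2)^n * (a₀ - Cs) + Cs) atTop (nhds Cs) := by
    have := (h0.mul_const (a₀ - Cs)).add (tendsto_const_nhds (x := Cs))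
    simpa using this
  have hfin : sInf (cSet μp μq) ≤ Cs := ge_of_tendsto' htend hle
  rw [show |p - q| = p - q from abs_of_pos (by linarith)]
  exact hfin

end W2Aux


/-- Corollary 2.7: upper and lower bounds for the second Wasserstein distance
between two self-similar measures. -/
theorem wasserstein2_bounds
    (c t₁ t₂ : ℝ) (hc : c ∈ Set.Ioc (0:ℝ) (1/2))
    (ht₁ : t₁ ∈ Set.Icc (0:ℝ) (1 - 2*c)) (ht₂ : t₂ ∈ Set.Icc (t₁ + c) (1 - c))
    (p q : ℝ) (hp : p ∈ Set.Ioo (0:ℝ) 1) (hq : q ∈ Set.Ioo (0:ℝ) 1) (hpq : p ≠ q)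
    (μp : Measure ℝ) (hμp : IsProbabilityMeasure μp)
    (hsuppp : μp ((Set.Icc (0:ℝ) 1)ᶜ) = 0)
    (hssp : μp = ENNReal.ofReal p • μp.map (fun x : ℝ => c * x + t₁)
               + ENNReal.ofReal (1 - p) • μp.map (fun x : ℝ => c * x + t₂))
    (μq : Measure ℝ) (hμq : IsProbabilityMeasure μq)
    (hsuppq : μq ((Set.Icc (0:ℝ) 1)ᶜ) = 0)
    (hssq : μq = ENNReal.ofReal q • μq.map (fun x : ℝ => c * x + t₁)
               + ENNReal.ofReal (1 - q) • μq.map (fun x : ℝ => c * x + t₂)) :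
    (((t₂ - t₁) / (1 - c))^2 * (p - q)^2 ≤ secondMomentInf μp μq ∧
      secondMomentInf μp μq
        ≤ ((t₂ - t₁) / (1 - c))^2 * ((2 * c * (p - q)^2 + (1 - c) * |p - q|) / (1 + c))) ∧
    ((t₂ - t₁) / (1 - c) * |p - q| ≤ wasserstein2 μp μq ∧
      wasserstein2 μp μq
        ≤ (t₂ - t₁) / (1 - c) *
            Real.sqrt ((2 * c * (p - q)^2 + (1 - c) * |p - q|) / (1 + c))) := by
  have hc0 := hc.1
  have hc2 := hc.2
  have h1c : (0:ℝ) < 1 - c := by linarith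
  have hΔ : (0:ℝ) < t₂ - t₁ := by linarith [ht₂.1]
  have hsmi : secondMomentInf μp μq = sInf (W2Aux.cSet μp μq) := rfl
  have hMp := W2Aux.mean_eq (by linarith : c < 1) hp.1.le hp.2.le
    (W2Aux.integrable_id_of_supp hsuppp) hssp
  have hMq := W2Aux.mean_eq (by linarith : c < 1) hq.1.le hq.2.le
    (W2Aux.integrable_id_of_supp hsuppq) hssq
  have hM : (∫ x, x ∂μp) - ∫ x, x ∂μq = (p - q) * (t₁ - t₂) / (1 - c) := by
    rw [eq_div_iff h1c.ne']
    linear_combination hMp - hMq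
  -- lower bound
  have hlow : ((t₂ - t₁) / (1 - c))^2 * (p - q)^2 ≤ secondMomentInf μp μq := by
    rw [hsmi]
    refine le_csInf (W2Aux.cSet_nonempty μp μq) (fun a ha => ?_)
    have h := W2Aux.element_ge hsuppp hsuppq ha
    rw [hM] at h
    calc ((t₂ - t₁) / (1 - c))^2 * (p - q)^2
        = ((p - q) * (t₁ - t₂) / (1 - c))^2 := by field_simp; ring
      _ ≤ a := h
  -- upper bound
  have hupper : secondMomentInf μp μq
      ≤ ((t₂ - t₁) / (1 - c))^2 * ((2 * c * (p - q)^2 + (1 - c) * |p - q|) / (1 + c)) := by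
    rcases lt_or_gt_of_ne hpq with h | h
    · have hu := W2Aux.upper_aux hc ht₁ ht₂ hq hp h hsuppq hsuppp hssq hssp
      rw [hsmi, W2Aux.cSet_comm]
      have e : 2 * c * (q - p)^2 + (1 - c) * |q - p|
          = 2 * c * (p - q)^2 + (1 - c) * |p - q| := by rw [abs_sub_comm]; ring
      rw [← e]
      exact hu
    · have hu := W2Aux.upper_aux hc ht₁ ht₂ hp hq h hsuppp hsuppq hssp hssq
      rw [hsmi]
      exact hu
  have hD : (0:ℝ) ≤ (t₂ - t₁) / (1 - c) := div_nonneg hΔ.le h1c.le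
  refine ⟨⟨hlow, hupper⟩, ?_, ?_⟩
  · have e : ((t₂ - t₁) / (1 - c))^2 * (p - q)^2
        = ((t₂ - t₁) / (1 - c) * |p - q|)^2 := by rw [mul_pow, sq_abs]
    have e2 : (t₂ - t₁) / (1 - c) * |p - q|
        = Real.sqrt (((t₂ - t₁) / (1 - c))^2 * (p - q)^2) := by
      rw [e, Real.sqrt_sq (mul_nonneg hD (abs_nonneg _))]
    rw [wasserstein2, e2]
    exact Real.sqrt_le_sqrt hlow
  · rw [wasserstein2]
    calc Real.sqrt (secondMomentInf μp μq)
        ≤ Real.sqrt (((t₂ - t₁) / (1 - c))^2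
            * ((2 * c * (p - q)^2 + (1 - c) * |p - q|) / (1 + c))) :=
          Real.sqrt_le_sqrt hupper
      _ = (t₂ - t₁) / (1 - c) *
            Real.sqrt ((2 * c * (p - q)^2 + (1 - c) * |p - q|) / (1 + c)) := by
          rw [Real.sqrt_mul (sq_nonneg _), Real.sqrt_sq hD]
end

section
/- Let N ≥ 1, let c₁, …, c_N ∈ (0,1) and t₁, …, t_N ∈ ℝ, and set S_i(x) = c_i x + t_i. Let p = (p₁, …, p_N) and q = (q₁, …, q_N) be probability vectors with each p_i, q_i ∈ (0,1), and let μ_p and μ_q be Borel probability measures on ℝ, supported in [0,1], satisfying μ_p = Σ_{i=1}^N p_i · μ_p ∘ S_i⁻¹ and μ_q = Σ_{i=1}^N q_i · μ_q ∘ S_i⁻¹. Then the first Wasserstein distance satisfies W₁(μ_p, μ_q) ≥ |(Σ_i p_i t_i)(1 − Σ_i q_i c_i) − (Σ_i q_i t_i)(1 − Σ_i p_i c_i)| / ((1 − Σ_i p_i c_i)(1 − Σ_i q_i c_i)). -/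
open MeasureTheory

lemma ae_mem_Icc_of_supp (μ : Measure ℝ) (h : μ ((Set.Icc (0:ℝ) 1)ᶜ) = 0) :
    ∀ᵐ x ∂μ, x ∈ Set.Icc (0:ℝ) 1 := by
  rw [ae_iff]
  exact h

lemma integrable_id_of_supp (μ : Measure ℝ) [IsProbabilityMeasure μ]
    (h : μ ((Set.Icc (0:ℝ) 1)ᶜ) = 0) : Integrable (fun x : ℝ => x) μ := by
  have hae : ∀ᵐ x ∂μ, ‖x‖ ≤ 1 := by
    filter_upwards [ae_mem_Icc_of_supp μ h] with x hx
    rw [Real.norm_eq_abs, abs_le]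
    exact ⟨le_trans (by norm_num) hx.1, hx.2⟩
  exact (integrable_const (1:ℝ)).mono' measurable_id.aestronglyMeasurable hae

lemma mean_self_similar (N : ℕ) (c t : Fin N → ℝ)
    (p : Fin N → ℝ) (hp0 : ∀ i, 0 ≤ p i)
    (μ : Measure ℝ) [IsProbabilityMeasure μ]
    (hint : Integrable (fun x : ℝ => x) μ)
    (hss : μ = ∑ i, ENNReal.ofReal (p i) • μ.map (fun x : ℝ => c i * x + t i)) :
    ∫ x, x ∂μ = (∑ i, p i * c i) * ∫ x, x ∂μ + ∑ i, p i * t i := by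
  have hmeas : ∀ i : Fin N, Measurable (fun x : ℝ => c i * x + t i) := fun i =>
    (measurable_id.const_mul _).add_const _
  have hintS : ∀ i : Fin N, Integrable (fun x : ℝ => c i * x + t i) μ := fun i =>
    (hint.const_mul _).add (integrable_const _)
  have hintmap : ∀ i : Fin N, Integrable (fun x : ℝ => x) (μ.map (fun x : ℝ => c i * x + t i)) :=
    fun i => (integrable_map_measure measurable_id.aestronglyMeasurable
      (hmeas i).aemeasurable).2 (hintS i)
  have key : ∫ x, x ∂μ = ∑ i : Fin N, p i * ∫ x, x ∂(μ.map (fun x : ℝ => c i * x + t i)) := by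
    conv_lhs => rw [hss]
    rw [integral_finset_sum_measure (fun i _ => (hintmap i).smul_measure ENNReal.ofReal_ne_top)]
    refine Finset.sum_congr rfl fun i _ => ?_
    rw [integral_smul_measure, ENNReal.toReal_ofReal (hp0 i), smul_eq_mul]
  have hmapi : ∀ i : Fin N, ∫ x, x ∂(μ.map (fun x : ℝ => c i * x + t i))
      = c i * ∫ x, x ∂μ + t i := by
    intro i
    rw [show (∫ x, x ∂(μ.map (fun x : ℝ => c i * x + t i))) = ∫ x, c i * x + t i ∂μ from
      integral_map (hmeas i).aemeasurable measurable_id.aestronglyMeasurable]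
    rw [integral_add (hint.const_mul _) (integrable_const _), integral_const_mul,
      integral_const, probReal_univ, smul_eq_mul, one_mul]
  have step : ∀ m : ℝ, ∑ i, p i * (c i * m + t i) = (∑ i, p i * c i) * m + ∑ i, p i * t i := by
    intro m
    rw [Finset.sum_mul, ← Finset.sum_add_distrib]
    exact Finset.sum_congr rfl fun i _ => by ring
  have key2 : ∫ x, x ∂μ = ∑ i, p i * (c i * (∫ x, x ∂μ) + t i) :=
    key.trans (Finset.sum_congr rfl fun i _ => by rw [hmapi])
  exact key2.trans (step _)

lemma contraction_lt_one (N : ℕ) (hN : 1 ≤ N) (c : Fin N → ℝ)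
    (hc : ∀ i, c i ∈ Set.Ioo (0:ℝ) 1)
    (p : Fin N → ℝ) (hp : ∀ i, p i ∈ Set.Ioo (0:ℝ) 1) (hpsum : ∑ i, p i = 1) :
    ∑ i, p i * c i < 1 := by
  calc ∑ i, p i * c i < ∑ i, p i := by
        refine Finset.sum_lt_sum_of_nonempty ?_ fun i _ => ?_
        · exact Finset.univ_nonempty_iff.mpr (Fin.pos_iff_nonempty.mp hN)
        · nlinarith [(hp i).1, (hc i).2]
    _ = 1 := hpsum

/-- A lower bound for the first Wasserstein distance between two self-similar
measures for a general IFS of N similitudes on the line with varying contraction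
ratios. -/
theorem wasserstein1_general_lower_bound
    (N : ℕ) (hN : 1 ≤ N) (c t : Fin N → ℝ)
    (hc : ∀ i, c i ∈ Set.Ioo (0:ℝ) 1)
    (p q : Fin N → ℝ)
    (hp : ∀ i, p i ∈ Set.Ioo (0:ℝ) 1) (hpsum : ∑ i, p i = 1)
    (hq : ∀ i, q i ∈ Set.Ioo (0:ℝ) 1) (hqsum : ∑ i, q i = 1)
    (μp : Measure ℝ) (hμp : IsProbabilityMeasure μp)
    (hsuppp : μp ((Set.Icc (0:ℝ) 1)ᶜ) = 0)
    (hssp : μp = ∑ i, ENNReal.ofReal (p i) • μp.map (fun x : ℝ => c i * x + t i))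
    (μq : Measure ℝ) (hμq : IsProbabilityMeasure μq)
    (hsuppq : μq ((Set.Icc (0:ℝ) 1)ᶜ) = 0)
    (hssq : μq = ∑ i, ENNReal.ofReal (q i) • μq.map (fun x : ℝ => c i * x + t i)) :
    wasserstein1 μp μq ≥
      |(∑ i, p i * t i) * (1 - ∑ i, q i * c i) - (∑ i, q i * t i) * (1 - ∑ i, p i * c i)|
        / ((1 - ∑ i, p i * c i) * (1 - ∑ i, q i * c i)) := by
  set Ip := ∫ x, x ∂μp with hIp
  set Iq := ∫ x, x ∂μq with hIq
  have hintp : Integrable (fun x : ℝ => x) μp := integrable_id_of_supp μp hsuppp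
  have hintq : Integrable (fun x : ℝ => x) μq := integrable_id_of_supp μq hsuppq
  have hBp : ∑ i, p i * c i < 1 := contraction_lt_one N hN c hc p hp hpsum
  have hBq : ∑ i, q i * c i < 1 := contraction_lt_one N hN c hc q hq hqsum
  have hmp : Ip = (∑ i, p i * c i) * Ip + ∑ i, p i * t i :=
    mean_self_similar N c t p (fun i => (hp i).1.le) μp hintp hssp
  have hmq : Iq = (∑ i, q i * c i) * Iq + ∑ i, q i * t i :=
    mean_self_similar N c t q (fun i => (hq i).1.le) μq hintq hssq
  have hDp : (0:ℝ) < 1 - ∑ i, p i * c i := by linarith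
  have hDq : (0:ℝ) < 1 - ∑ i, q i * c i := by linarith
  have hIpval : Ip = (∑ i, p i * t i) / (1 - ∑ i, p i * c i) := by
    field_simp; linarith
  have hIqval : Iq = (∑ i, q i * t i) / (1 - ∑ i, q i * c i) := by
    field_simp; linarith
  have hrhs : |(∑ i, p i * t i) * (1 - ∑ i, q i * c i) - (∑ i, q i * t i) * (1 - ∑ i, p i * c i)|
        / ((1 - ∑ i, p i * c i) * (1 - ∑ i, q i * c i)) = |Ip - Iq| := by
    rw [hIpval, hIqval, div_sub_div _ _ (ne_of_gt hDp) (ne_of_gt hDq), abs_div,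
      abs_of_pos (mul_pos hDp hDq)]
    ring_nf
  rw [ge_iff_le, hrhs]
  -- now show |Ip - Iq| ≤ wasserstein1 μp μq
  unfold wasserstein1
  refine le_csInf ?_ ?_
  · refine ⟨∫ z : ℝ × ℝ, |z.1 - z.2| ∂(μp.prod μq), μp.prod μq, inferInstance, ?_, ?_, rfl⟩
    · rw [Measure.map_fst_prod, measure_univ, one_smul]
    · rw [Measure.map_snd_prod, measure_univ, one_smul]
  · rintro a ⟨γ, hγ, hfst, hsnd, rfl⟩
    have hfstae : ∀ᵐ z : ℝ × ℝ ∂γ, z.1 ∈ Set.Icc (0:ℝ) 1 := by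
      have h0 : γ (Prod.fst ⁻¹' (Set.Icc (0:ℝ) 1)ᶜ) = 0 := by
        rw [← Measure.map_apply measurable_fst measurableSet_Icc.compl, hfst]
        exact hsuppp
      rw [ae_iff]
      exact h0
    have hsndae : ∀ᵐ z : ℝ × ℝ ∂γ, z.2 ∈ Set.Icc (0:ℝ) 1 := by
      have h0 : γ (Prod.snd ⁻¹' (Set.Icc (0:ℝ) 1)ᶜ) = 0 := by
        rw [← Measure.map_apply measurable_snd measurableSet_Icc.compl, hsnd]
        exact hsuppq
      rw [ae_iff]
      exact h0
    have hint1 : Integrable (fun z : ℝ × ℝ => z.1) γ := by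
      refine (integrable_const (1:ℝ)).mono' measurable_fst.aestronglyMeasurable ?_
      filter_upwards [hfstae] with z hz
      rw [Real.norm_eq_abs, abs_le]; exact ⟨le_trans (by norm_num) hz.1, hz.2⟩
    have hint2 : Integrable (fun z : ℝ × ℝ => z.2) γ := by
      refine (integrable_const (1:ℝ)).mono' measurable_snd.aestronglyMeasurable ?_
      filter_upwards [hsndae] with z hz
      rw [Real.norm_eq_abs, abs_le]; exact ⟨le_trans (by norm_num) hz.1, hz.2⟩
    have h1 : ∫ z : ℝ × ℝ, z.1 ∂γ = Ip := by
      rw [hIp, ← hfst]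
      exact (integral_map measurable_fst.aemeasurable
        measurable_id.aestronglyMeasurable).symm
    have h2 : ∫ z : ℝ × ℝ, z.2 ∂γ = Iq := by
      rw [hIq, ← hsnd]
      exact (integral_map measurable_snd.aemeasurable
        measurable_id.aestronglyMeasurable).symm
    calc |Ip - Iq| = |∫ z : ℝ × ℝ, (z.1 - z.2) ∂γ| := by
          rw [integral_sub hint1 hint2, h1, h2]
      _ ≤ ∫ z : ℝ × ℝ, |z.1 - z.2| ∂γ := by
          simpa [Real.norm_eq_abs] using
            norm_integral_le_integral_norm (fun z : ℝ × ℝ => z.1 - z.2) (μ := γ)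
end
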